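/- The tree edit distance between forests F and G equals half the minimum cost over all tree alignments of their parenthesis representations: 2·ted(F,G) = min over tree alignments A of the alignment cost of A between str(F) and str(G). -/

import Mathlib

/-- Rooted ordered labeled trees. -/
inductive LTree (α : Type) : Type where
  | node : α → List (LTree α) → LTree α

mutual
  /-- Number of nodes of a labeled tree. -/
  def tsize {α : Type} : LTree α → ℕ
    | .node _ ts => 1 + fsize ts
  /-- Number of nodes of a labeled forest. -/
  def fsize {α : Type} : List (LTree α) → ℕ
    | [] => 0
    | t :: ts => tsize t + fsize ts
end

mutual
  /-- Parenthesis representation of a tree: `(_a · str(children) · )_a`. -/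
  def pstr {α : Type} : LTree α → List (Bool × α)
    | .node a ts => (true, a) :: (pforest ts ++ [(false, a)])
  /-- Parenthesis representation of a forest. -/
  def pforest {α : Type} : List (LTree α) → List (Bool × α)
    | [] => []
    | t :: ts => pstr t ++ pforest ts
end

mutual
  /-- The pair `(o(u), c(u))` of positions, in the parenthesis representation,
  of the node `u` of a tree addressed by a list of child indices. -/
  def tpos {α : Type} : LTree α → List ℕ → Option (ℕ × ℕ)
    | t, [] => some (0, (pstr t).length - 1)
    | .node _ ts, k :: addr => (fpos ts (k :: addr)).map (fun p => (p.1 + 1, p.2 + 1))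
  /-- The pair `(o(u), c(u))` of positions of the node of a forest addressed by a
  nonempty list of child indices (the first index selects the tree). -/
  def fpos {α : Type} : List (LTree α) → List ℕ → Option (ℕ × ℕ)
    | [], _ => none
    | _ :: _, [] => none
    | t :: _, 0 :: addr => tpos t addr
    | t :: ts, (k + 1) :: addr =>
        (fpos ts (k :: addr)).map (fun p => (p.1 + (pstr t).length, p.2 + (pstr t).length))
end

mutual
  /-- The subtree of a tree at a given address. -/
  def tSub {α : Type} : LTree α → List ℕ → Option (LTree α)
    | t, [] => some t
    | .node _ ts, k :: addr => fSub ts (k :: addr)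
  /-- The subtree of a forest at a given (nonempty) address. -/
  def fSub {α : Type} : List (LTree α) → List ℕ → Option (LTree α)
    | [], _ => none
    | _ :: _, [] => none
    | t :: _, 0 :: addr => tSub t addr
    | _ :: ts, (k + 1) :: addr => fSub ts (k :: addr)
end

/-- One node edit on a forest: relabel a node, delete a node (splicing its children
into its place), or insert a node (gathering a contiguous run of siblings as its
children); edits may occur at any depth. -/
inductive FStep {α : Type} : List (LTree α) → List (LTree α) → Prop where
  | relabel (pre post ts : List (LTree α)) (a b : α) :
      FStep (pre ++ LTree.node a ts :: post) (pre ++ LTree.node b ts :: post)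
  | delete (pre post ts : List (LTree α)) (a : α) :
      FStep (pre ++ LTree.node a ts :: post) (pre ++ ts ++ post)
  | insert (pre mid post : List (LTree α)) (a : α) :
      FStep (pre ++ mid ++ post) (pre ++ LTree.node a mid :: post)
  | congr (pre post ts ts' : List (LTree α)) (a : α) :
      FStep ts ts' → FStep (pre ++ LTree.node a ts :: post) (pre ++ LTree.node a ts' :: post)

/-- `FEdits n F G` : `G` can be obtained from `F` by `n` node edits. -/
inductive FEdits {α : Type} : ℕ → List (LTree α) → List (LTree α) → Prop where
  | refl (F : List (LTree α)) : FEdits 0 F F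
  | step {n : ℕ} {F G H : List (LTree α)} :
      FStep F G → FEdits n G H → FEdits (n + 1) F H

/-- Tree edit distance: minimum number of node insertions, deletions, and label
substitutions transforming forest `F` into forest `G`. -/
noncomputable def ted {α : Type} (F G : List (LTree α)) : ℕ :=
  sInf {n | FEdits n F G}

/-- A monotone matching: a list of index pairs strictly increasing in both
coordinates. -/
def IsMatching (M : List (ℕ × ℕ)) : Prop :=
  M.Chain' (fun p q => p.1 < q.1 ∧ p.2 < q.2)

/-- All pairs of the matching are within the bounds of the two strings. -/
def InBounds {β : Type} (s t : List β) (M : List (ℕ × ℕ)) : Prop :=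
  ∀ p ∈ M, p.1 < s.length ∧ p.2 < t.length

/-- The cost of the alignment represented by the monotone matching `M` of `s` and
`t` : deletions in `s`, plus deletions in `t`, plus substitutions (aligned pairs of
distinct characters). -/
def alignCost {β : Type} [DecidableEq β] (s t : List β) (d : β) (M : List (ℕ × ℕ)) : ℕ :=
  (s.length - M.length) + (t.length - M.length) +
    M.countP (fun p => decide (s.getD p.1 d ≠ t.getD p.2 d))

/-- A tree alignment of forests `F` and `G` : an alignment (monotone matching) of
their parenthesis representations such that, for each node `u` of `F`, either both
parentheses of `u` are deleted, or there is a node `v` of `G` whose opening and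
closing parentheses are aligned with those of `u`. -/
def TreeAligned {α : Type} (F G : List (LTree α)) (M : List (ℕ × ℕ)) : Prop :=
  IsMatching M ∧ InBounds (pforest F) (pforest G) M ∧
    ∀ a ou cu, fpos F a = some (ou, cu) →
      ((∀ q ∈ M, q.1 ≠ ou ∧ q.1 ≠ cu) ∨
        ∃ b ov cv, fpos G b = some (ov, cv) ∧ (ou, ov) ∈ M ∧ (cu, cv) ∈ M)

namespace TedAux
open List

variable {α : Type}

@[simp] lemma pforest_nil : pforest ([] : List (LTree α)) = [] := by simp [pforest]
@[simp] lemma pforest_cons (t : LTree α) (F : List (LTree α)) :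
    pforest (t :: F) = pstr t ++ pforest F := by simp [pforest]
@[simp] lemma pstr_node (a : α) (ts : List (LTree α)) :
    pstr (LTree.node a ts) = (true, a) :: (pforest ts ++ [(false, a)]) := by simp [pstr]

lemma pforest_append (F G : List (LTree α)) :
    pforest (F ++ G) = pforest F ++ pforest G := by
  induction F with
  | nil => simp
  | cons t F ih => simp [ih]

mutual
theorem length_pstr : ∀ (t : LTree α), (pstr t).length = 2 * tsize t
  | .node a ts => by
      simp [tsize, length_pforest ts]; omega
theorem length_pforest : ∀ (F : List (LTree α)), (pforest F).length = 2 * fsize F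
  | [] => by simp [fsize]
  | t :: F => by simp [fsize, length_pstr t, length_pforest F]; omega
end

/-- The parenthesis-pair positions of nodes of a tree. -/
def TPairs (t : LTree α) (o c : ℕ) : Prop := ∃ addr, tpos t addr = some (o, c)
/-- The parenthesis-pair positions of nodes of a forest. -/
def NPairs (F : List (LTree α)) (o c : ℕ) : Prop := ∃ addr, fpos F addr = some (o, c)

@[simp] lemma fpos_nil (a : List ℕ) : fpos ([] : List (LTree α)) a = none := by simp [fpos]
@[simp] lemma fpos_nil_addr (t : LTree α) (F : List (LTree α)) :
    fpos (t :: F) ([] : List ℕ) = none := by simp [fpos]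
@[simp] lemma fpos_zero (t : LTree α) (F : List (LTree α)) (r : List ℕ) :
    fpos (t :: F) (0 :: r) = tpos t r := by simp [fpos]
@[simp] lemma fpos_succ (t : LTree α) (F : List (LTree α)) (k : ℕ) (r : List ℕ) :
    fpos (t :: F) ((k+1) :: r) =
      (fpos F (k :: r)).map (fun p => (p.1 + (pstr t).length, p.2 + (pstr t).length)) := by
  simp [fpos]
@[simp] lemma tpos_nil_addr (t : LTree α) :
    tpos t ([] : List ℕ) = some (0, (pstr t).length - 1) := by
  cases t; simp [tpos]
@[simp] lemma tpos_cons (a : α) (ts : List (LTree α)) (k : ℕ) (r : List ℕ) :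
    tpos (LTree.node a ts) (k :: r) =
      (fpos ts (k :: r)).map (fun p => (p.1 + 1, p.2 + 1)) := by simp [tpos]

lemma npairs_nil (o c : ℕ) : ¬ NPairs ([] : List (LTree α)) o c := by
  rintro ⟨a, h⟩; simp at h

lemma npairs_cons {t : LTree α} {F : List (LTree α)} {o c : ℕ} :
    NPairs (t :: F) o c ↔
      TPairs t o c ∨ ∃ o' c', NPairs F o' c' ∧ o = o' + (pstr t).length ∧
        c = c' + (pstr t).length := by
  constructor
  · rintro ⟨addr, h⟩
    match addr with
    | [] => simp at h
    | 0 :: r => exact Or.inl ⟨r, by simpa using h⟩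
    | (k+1) :: r =>
      simp only [fpos_succ, Option.map_eq_some_iff] at h
      obtain ⟨⟨o', c'⟩, h', he⟩ := h
      exact Or.inr ⟨o', c', ⟨k :: r, h'⟩, by simpa using he.symm⟩
  · rintro (⟨addr, h⟩ | ⟨o', c', ⟨addr, h⟩, rfl, rfl⟩)
    · exact ⟨0 :: addr, by simpa using h⟩
    · match F, addr with
      | [], _ => simp at h
      | _ :: _, [] => simp at h
      | s :: F, k :: r => exact ⟨(k+1) :: r, by simp [h]⟩

lemma tpairs_node {a : α} {ts : List (LTree α)} {o c : ℕ} :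
    TPairs (LTree.node a ts) o c ↔
      (o = 0 ∧ c = 2 * fsize ts + 1) ∨
        ∃ o' c', NPairs ts o' c' ∧ o = o' + 1 ∧ c = c' + 1 := by
  constructor
  · rintro ⟨addr, h⟩
    match addr with
    | [] =>
      simp [length_pforest] at h
      exact Or.inl ⟨h.1.symm, by omega⟩
    | k :: r =>
      simp only [tpos_cons, Option.map_eq_some_iff] at h
      obtain ⟨⟨o', c'⟩, h', he⟩ := h
      exact Or.inr ⟨o', c', ⟨k :: r, h'⟩, by simpa using he.symm⟩
  · rintro (⟨rfl, rfl⟩ | ⟨o', c', ⟨addr, h⟩, rfl, rfl⟩)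
    · exact ⟨[], by simp [length_pforest]⟩
    · match ts, addr with
      | [], _ => simp at h
      | _ :: _, [] => simp at h
      | s :: ts, k :: r => exact ⟨k :: r, by simp [h]⟩

lemma npairs_append {F G : List (LTree α)} {o c : ℕ} :
    NPairs (F ++ G) o c ↔
      NPairs F o c ∨ ∃ o' c', NPairs G o' c' ∧ o = o' + (pforest F).length ∧
        c = c' + (pforest F).length := by
  induction F generalizing o c with
  | nil =>
    simp only [List.nil_append, pforest_nil, List.length_nil]
    constructor
    · intro h; exact Or.inr ⟨o, c, h, by omega, by omega⟩
    · rintro (h | ⟨o', c', h, rfl, rfl⟩)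
      · exact absurd h (npairs_nil o c)
      · simpa using h
  | cons t F ih =>
    simp only [List.cons_append, npairs_cons, ih, pforest_cons, List.length_append]
    constructor
    · rintro (h | ⟨o', c', (h | ⟨o'', c'', h, rfl, rfl⟩), rfl, rfl⟩)
      · exact Or.inl (Or.inl h)
      · exact Or.inl (Or.inr ⟨o', c', h, rfl, rfl⟩)
      · exact Or.inr ⟨o'', c'', h, by omega, by omega⟩
    · rintro ((h | ⟨o', c', h, rfl, rfl⟩) | ⟨o', c', h, rfl, rfl⟩)
      · exact Or.inl h
      · exact Or.inr ⟨o', c', Or.inl h, rfl, rfl⟩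
      · exact Or.inr ⟨o' + (pforest F).length, c' + (pforest F).length,
          Or.inr ⟨o', c', h, rfl, rfl⟩, by omega, by omega⟩

mutual
theorem tpairs_bounds : ∀ (t : LTree α) {o c : ℕ}, TPairs t o c →
    o < c ∧ c < (pstr t).length
  | .node a ts, o, c, h => by
    rcases tpairs_node.mp h with ⟨rfl, rfl⟩ | ⟨o', c', h', rfl, rfl⟩
    · simp [length_pforest]
    · have := npairs_bounds ts h'
      simp_all [length_pforest]; omega
theorem npairs_bounds : ∀ (F : List (LTree α)) {o c : ℕ}, NPairs F o c →
    o < c ∧ c < (pforest F).length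
  | [], o, c, h => absurd h (npairs_nil o c)
  | t :: F, o, c, h => by
    rcases npairs_cons.mp h with h' | ⟨o', c', h', rfl, rfl⟩
    · have := tpairs_bounds t h'
      simp; omega
    · have := npairs_bounds F h'
      simp; omega
end

mutual
theorem tpairs_complete : ∀ (t : LTree α) (i : ℕ), i < (pstr t).length →
    ∃ o c, TPairs t o c ∧ (i = o ∨ i = c)
  | .node a ts, i, hi => by
    rcases Nat.eq_or_lt_of_le (Nat.zero_le i) with h0 | h0
    · exact ⟨0, 2 * fsize ts + 1, tpairs_node.mpr (Or.inl ⟨rfl, rfl⟩), Or.inl h0.symm⟩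
    rcases Nat.lt_or_ge i (2 * fsize ts + 1) with h1 | h1
    · obtain ⟨o, c, hp, hor⟩ := npairs_complete ts (i - 1)
        (by simp [length_pforest]; omega)
      exact ⟨o + 1, c + 1, tpairs_node.mpr (Or.inr ⟨o, c, hp, rfl, rfl⟩), by omega⟩
    · have : i = 2 * fsize ts + 1 := by
        have := hi; simp [length_pforest] at this; omega
      exact ⟨0, 2 * fsize ts + 1, tpairs_node.mpr (Or.inl ⟨rfl, rfl⟩), Or.inr this⟩
theorem npairs_complete : ∀ (F : List (LTree α)) (i : ℕ), i < (pforest F).length →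
    ∃ o c, NPairs F o c ∧ (i = o ∨ i = c)
  | [], i, hi => by simp at hi
  | t :: F, i, hi => by
    rcases Nat.lt_or_ge i (pstr t).length with h1 | h1
    · obtain ⟨o, c, hp, hor⟩ := tpairs_complete t i h1
      exact ⟨o, c, npairs_cons.mpr (Or.inl hp), hor⟩
    · obtain ⟨o, c, hp, hor⟩ := npairs_complete F (i - (pstr t).length)
        (by simp at hi ⊢; omega)
      exact ⟨o + (pstr t).length, c + (pstr t).length,
        npairs_cons.mpr (Or.inr ⟨o, c, hp, rfl, rfl⟩), by omega⟩
end

end TedAux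
namespace TedAux
open List

/-- strict order on pairs used by matchings -/
abbrev lt2 : ℕ × ℕ → ℕ × ℕ → Prop := fun p q => p.1 < q.1 ∧ p.2 < q.2

instance : IsTrans (ℕ × ℕ) lt2 :=
  ⟨fun _ _ _ h1 h2 => ⟨h1.1.trans h2.1, h1.2.trans h2.2⟩⟩

lemma isMatching_iff {M : List (ℕ × ℕ)} : IsMatching M ↔ M.Pairwise lt2 :=
  List.isChain_iff_pairwise

lemma pairwise_trichotomy {β : Type*} {R : β → β → Prop} :
    ∀ {l : List β}, l.Pairwise R → ∀ a b, a ∈ l → b ∈ l → a = b ∨ R a b ∨ R b a := by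
  intro l h
  induction h with
  | nil => intro a b ha _; simp at ha
  | @cons x l hr _ ih =>
    intro a b ha hb
    rcases List.mem_cons.mp ha with rfl | ha'
    · rcases List.mem_cons.mp hb with rfl | hb'
      · exact Or.inl rfl
      · exact Or.inr (Or.inl (hr _ hb'))
    · rcases List.mem_cons.mp hb with rfl | hb'
      · exact Or.inr (Or.inr (hr _ ha'))
      · exact ih _ _ ha' hb'

lemma mem_ord {M : List (ℕ × ℕ)} (h : M.Pairwise lt2) {p q : ℕ × ℕ}
    (hp : p ∈ M) (hq : q ∈ M) (hlt : p.1 < q.1) : p.2 < q.2 := by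
  rcases pairwise_trichotomy h p q hp hq with rfl | h' | h'
  · omega
  · exact h'.2
  · exact absurd hlt (by omega)

lemma mem_fst_inj {M : List (ℕ × ℕ)} (h : M.Pairwise lt2) {p q : ℕ × ℕ}
    (hp : p ∈ M) (hq : q ∈ M) (he : p.1 = q.1) : p = q := by
  rcases pairwise_trichotomy h p q hp hq with rfl | h' | h'
  · rfl
  · exact absurd h'.1 (by omega)
  · exact absurd h'.1 (by omega)

lemma mem_snd_inj {M : List (ℕ × ℕ)} (h : M.Pairwise lt2) {p q : ℕ × ℕ}
    (hp : p ∈ M) (hq : q ∈ M) (he : p.2 = q.2) : p = q := by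
  rcases pairwise_trichotomy h p q hp hq with rfl | h' | h'
  · rfl
  · exact absurd h'.2 (by omega)
  · exact absurd h'.2 (by omega)

lemma matching_nodup {M : List (ℕ × ℕ)} (h : M.Pairwise lt2) : M.Nodup :=
  h.imp (fun hab => by rintro rfl; exact absurd hab.1 (lt_irrefl _))

lemma length_le_of_lt {L : List ℕ} {n : ℕ} (hn : L.Nodup) (hb : ∀ x ∈ L, x < n) :
    L.length ≤ n := by
  have hsub : L.toFinset ⊆ Finset.range n := fun x hx =>
    Finset.mem_range.mpr (hb x (List.mem_toFinset.mp hx))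
  calc L.length = L.toFinset.card := (List.toFinset_card_of_nodup hn).symm
    _ ≤ n := by simpa using Finset.card_le_card hsub

lemma nodup_fsts {M : List (ℕ × ℕ)} (h : M.Pairwise lt2) : (M.map Prod.fst).Nodup :=
  List.pairwise_map.mpr (h.imp (fun hab => by omega))

lemma nodup_snds {M : List (ℕ × ℕ)} (h : M.Pairwise lt2) : (M.map Prod.snd).Nodup :=
  List.pairwise_map.mpr (h.imp (fun hab => by omega))

lemma matching_length_le_fst {M : List (ℕ × ℕ)} {n : ℕ} (h : M.Pairwise lt2)
    (hb : ∀ p ∈ M, p.1 < n) : M.length ≤ n := by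
  have := length_le_of_lt (nodup_fsts h) (fun x hx => by
    obtain ⟨p, hp, rfl⟩ := List.mem_map.mp hx; exact hb p hp)
  simpa using this

lemma matching_length_le_snd {M : List (ℕ × ℕ)} {n : ℕ} (h : M.Pairwise lt2)
    (hb : ∀ p ∈ M, p.2 < n) : M.length ≤ n := by
  have := length_le_of_lt (nodup_snds h) (fun x hx => by
    obtain ⟨p, hp, rfl⟩ := List.mem_map.mp hx; exact hb p hp)
  simpa using this

/-- length of a nodup list of naturals below `n` avoiding two values -/
lemma length_le_of_lt_avoid {L : List ℕ} {n x y : ℕ} (hn : L.Nodup)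
    (hxy : x ≠ y) (hx : x < n) (hy : y < n)
    (hb : ∀ z ∈ L, z < n ∧ z ≠ x ∧ z ≠ y) : L.length ≤ n - 2 := by
  have hsub : L.toFinset ⊆ ((Finset.range n).erase x).erase y := by
    intro z hz
    obtain ⟨h1, h2, h3⟩ := hb z (List.mem_toFinset.mp hz)
    simp [Finset.mem_erase, h2, h3, Finset.mem_range, h1]
  have hcard : (((Finset.range n).erase x).erase y).card = n - 2 := by
    rw [Finset.card_erase_of_mem, Finset.card_erase_of_mem] <;>
      simp [Finset.mem_erase, Finset.mem_range, hx, hy, hxy.symm]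
    omega
  calc L.length = L.toFinset.card := (List.toFinset_card_of_nodup hn).symm
    _ ≤ _ := Finset.card_le_card hsub
    _ = n - 2 := hcard

lemma countP_disj_le {β : Type*} (l : List β) (p q : β → Bool) :
    l.countP (fun x => p x || q x) ≤ l.countP p + l.countP q := by
  induction l with
  | nil => simp
  | cons a l ih =>
    by_cases hp : p a <;> by_cases hq : q a <;>
      simp [List.countP_cons, hp, hq] <;> omega

lemma find?_of_mem {M : List (ℕ × ℕ)} (h : M.Pairwise lt2) {j k : ℕ}
    (hm : (j, k) ∈ M) : M.find? (fun q => q.1 == j) = some (j, k) := by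
  induction M with
  | nil => simp at hm
  | cons p M ih =>
    rcases List.mem_cons.mp hm with rfl | hm'
    · simp [List.find?]
    · have hne : p.1 ≠ j := by
        have := (List.pairwise_cons.mp h).1 _ hm'
        omega
      have : (p.1 == j) = false := by simpa using hne
      simp only [List.find?, this]
      exact ih (List.pairwise_cons.mp h).2 hm'

end TedAux
namespace TedAux
open List

variable {α : Type}

lemma fsize_append (F G : List (LTree α)) : fsize (F ++ G) = fsize F + fsize G := by
  induction F with
  | nil => simp [fsize]
  | cons t F ih => simp [fsize, ih]; omega

lemma fedits_trans {m n : ℕ} {F G H : List (LTree α)}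
    (h1 : FEdits m F G) (h2 : FEdits n G H) : FEdits (m + n) F H := by
  induction h1 with
  | refl => simpa using h2
  | @step m' F' G' H' s _ ih =>
    have := FEdits.step s (ih h2)
    have he : m' + n + 1 = m' + 1 + n := by omega
    rwa [← he]

lemma fedits_snoc {n : ℕ} {F G H : List (LTree α)} (h : FEdits n F G) (s : FStep G H) :
    FEdits (n + 1) F H :=
  fedits_trans h (FEdits.step s (FEdits.refl H))

lemma fstep_cons {F G : List (LTree α)} (t : LTree α) (h : FStep F G) :
    FStep (t :: F) (t :: G) := by
  cases h with
  | relabel pre post ts a b =>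
    have := FStep.relabel (t :: pre) post ts a b; simpa using this
  | delete pre post ts a =>
    have := FStep.delete (t :: pre) post ts a; simpa using this
  | insert pre mid post a =>
    have := FStep.insert (t :: pre) mid post a; simpa using this
  | congr pre post ts ts' a h' =>
    have := FStep.congr (t :: pre) post ts ts' a h'; simpa using this

lemma fedits_cons {n : ℕ} {F G : List (LTree α)} (t : LTree α) (h : FEdits n F G) :
    FEdits n (t :: F) (t :: G) := by
  induction h with
  | refl => exact FEdits.refl _
  | step s _ ih => exact FEdits.step (fstep_cons t s) ih

lemma fstep_congr_head {ts ss F : List (LTree α)} (a : α) (h : FStep ts ss) :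
    FStep (LTree.node a ts :: F) (LTree.node a ss :: F) := by
  have := FStep.congr ([] : List (LTree α)) F ts ss a h; simpa using this

lemma fedits_congr_head {n : ℕ} {ts ss : List (LTree α)} (F : List (LTree α)) (a : α)
    (h : FEdits n ts ss) : FEdits n (LTree.node a ts :: F) (LTree.node a ss :: F) := by
  induction h with
  | refl => exact FEdits.refl _
  | step s _ ih => exact FEdits.step (fstep_congr_head a s) ih

theorem fedits_nil_to : ∀ (G : List (LTree α)), FEdits (fsize G) [] G
  | [] => FEdits.refl []
  | .node a ts :: G' => by
    have h1 := fedits_nil_to (ts ++ G')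
    have h2 : FStep (ts ++ G') (LTree.node a ts :: G') := by
      have := FStep.insert ([] : List (LTree α)) ts G' a; simpa using this
    have h3 := fedits_snoc h1 h2
    have heq : fsize (ts ++ G') + 1 = fsize (LTree.node a ts :: G') := by
      simp only [fsize_append, fsize, tsize]; omega
    rwa [heq] at h3
  termination_by G => fsize G
  decreasing_by simp only [fsize_append, fsize, tsize]; omega

theorem fedits_to_nil : ∀ (F : List (LTree α)), FEdits (fsize F) F []
  | [] => FEdits.refl []
  | .node a ts :: F' => by
    have h2 : FStep (LTree.node a ts :: F') (ts ++ F') := by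
      have := FStep.delete ([] : List (LTree α)) F' ts a; simpa using this
    have h1 := fedits_to_nil (ts ++ F')
    have h3 := FEdits.step h2 h1
    have heq : fsize (ts ++ F') + 1 = fsize (LTree.node a ts :: F') := by
      simp only [fsize_append, fsize, tsize]; omega
    rwa [heq] at h3
  termination_by F => fsize F
  decreasing_by simp only [fsize_append, fsize, tsize]; omega

lemma ted_le {n : ℕ} {F G : List (LTree α)} (h : FEdits n F G) : ted F G ≤ n :=
  Nat.sInf_le h

lemma edits_ted (F G : List (LTree α)) : FEdits (ted F G) F G := by
  have h : {n | FEdits n F G}.Nonempty :=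
    ⟨fsize F + fsize G, fedits_trans (fedits_to_nil F) (fedits_nil_to G)⟩
  unfold ted
  exact Nat.sInf_mem h

end TedAux
namespace TedAux
open List

variable {α : Type} [DecidableEq α]

/-- composition of two matchings -/
def comp (M1 M2 : List (ℕ × ℕ)) : List (ℕ × ℕ) :=
  M1.filterMap (fun p => (M2.find? (fun q => q.1 == p.2)).map (fun q => (p.1, q.2)))

lemma mem_comp {M1 M2 : List (ℕ × ℕ)} (h2 : M2.Pairwise lt2) {r : ℕ × ℕ} :
    r ∈ comp M1 M2 ↔ ∃ j, (r.1, j) ∈ M1 ∧ (j, r.2) ∈ M2 := by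
  constructor
  · intro hr
    obtain ⟨p, hp, hf⟩ := List.mem_filterMap.mp hr
    obtain ⟨q, hq, he⟩ := Option.map_eq_some_iff.mp hf
    have hq1 : q.1 = p.2 := by simpa using List.find?_some hq
    have hqm : q ∈ M2 := List.mem_of_find?_eq_some hq
    refine ⟨p.2, ?_, ?_⟩
    · have : r.1 = p.1 := by rw [← he]
      rw [this]; simpa using hp
    · have : r.2 = q.2 := by rw [← he]
      rw [this, ← hq1]; simpa using hqm
  · rintro ⟨j, h1, h2'⟩
    refine List.mem_filterMap.mpr ⟨(r.1, j), h1, ?_⟩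
    rw [show (M2.find? (fun q => q.1 == (r.1, j).2)) = some (j, r.2) from
      find?_of_mem h2 h2']
    simp

lemma comp_pairwise {M1 M2 : List (ℕ × ℕ)} (h1 : M1.Pairwise lt2)
    (h2 : M2.Pairwise lt2) : (comp M1 M2).Pairwise lt2 := by
  rw [comp, List.pairwise_filterMap]
  refine h1.imp_of_mem (fun {p p'} hp hp' hlt => ?_)
  intro b hb b' hb'
  obtain ⟨q, hq, he⟩ := Option.map_eq_some_iff.mp hb
  obtain ⟨q', hq', he'⟩ := Option.map_eq_some_iff.mp hb'
  have hq1 : q.1 = p.2 := by simpa using List.find?_some hq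
  have hq1' : q'.1 = p'.2 := by simpa using List.find?_some hq'
  have hqm : q ∈ M2 := List.mem_of_find?_eq_some hq
  have hqm' : q' ∈ M2 := List.mem_of_find?_eq_some hq'
  have h22 : q.2 < q'.2 := mem_ord h2 hqm hqm' (by omega)
  subst he he'
  exact ⟨by simpa using hlt.1, by simpa using h22⟩

lemma length_filterMap_eq_countP {γ δ : Type*} (f : γ → Option δ) (l : List γ) :
    (l.filterMap f).length = l.countP (fun x => (f x).isSome) := by
  induction l with
  | nil => simp
  | cons a l ih =>
    cases h : f a <;> simp [List.filterMap_cons, h, List.countP_cons, ih]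

lemma comp_card {M1 M2 : List (ℕ × ℕ)} {n : ℕ} (h1 : M1.Pairwise lt2)
    (h2 : M2.Pairwise lt2) (hb1 : ∀ p ∈ M1, p.2 < n) (hb2 : ∀ q ∈ M2, q.1 < n) :
    M1.length + M2.length ≤ n + (comp M1 M2).length := by
  classical
  set L1 := M1.map Prod.snd with hL1
  set L2 := M2.map Prod.fst with hL2
  have hn1 : L1.Nodup := nodup_snds h1
  have hn2 : L2.Nodup := nodup_fsts h2
  set pred : ℕ → Bool := fun j => (M2.find? (fun q => q.1 == j)).isSome with hpred
  have hcomp : (comp M1 M2).length = L1.countP pred := by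
    rw [comp, length_filterMap_eq_countP, hL1, List.countP_map]
    congr 1
    funext x
    cases hx : (M2.find? fun q => q.1 == x.2) <;> simp [hpred, Function.comp, hx]
  have hfil : (L1.filter pred).toFinset = L1.toFinset ∩ L2.toFinset := by
    ext j
    simp only [List.toFinset_filter, Finset.mem_filter, Finset.mem_inter,
      List.mem_toFinset, hpred, List.find?_isSome, hL2, List.mem_map]
    constructor
    · rintro ⟨hj, q, hq, he⟩
      exact ⟨hj, q, hq, by simpa using he⟩
    · rintro ⟨hj, q, hq, he⟩
      exact ⟨hj, q, hq, by simpa using he⟩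
  have hlen : (comp M1 M2).length = (L1.toFinset ∩ L2.toFinset).card := by
    rw [hcomp, List.countP_eq_length_filter, ← hfil,
      List.toFinset_card_of_nodup (hn1.filter _)]
  have hsub : L1.toFinset ∪ L2.toFinset ⊆ Finset.range n := by
    intro j hj
    rcases Finset.mem_union.mp hj with hj | hj
    · obtain ⟨p, hp, rfl⟩ := List.mem_map.mp (List.mem_toFinset.mp hj)
      exact Finset.mem_range.mpr (hb1 p hp)
    · obtain ⟨q, hq, rfl⟩ := List.mem_map.mp (List.mem_toFinset.mp hj)
      exact Finset.mem_range.mpr (hb2 q hq)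
  have hcards := Finset.card_union_add_card_inter L1.toFinset L2.toFinset
  have hle : (L1.toFinset ∪ L2.toFinset).card ≤ n := by
    simpa using Finset.card_le_card hsub
  have e1 : L1.toFinset.card = M1.length := by
    rw [List.toFinset_card_of_nodup hn1]; simp [hL1]
  have e2 : L2.toFinset.card = M2.length := by
    rw [List.toFinset_card_of_nodup hn2]; simp [hL2]
  omega

lemma countP_le_of_subset_nodup {γ : Type*} [DecidableEq γ] {l m : List γ}
    (hl : l.Nodup) (hsub : ∀ x ∈ l, x ∈ m) (p : γ → Bool) :
    l.countP p ≤ m.countP p := by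
  have hms : (l : Multiset γ) ≤ (m : Multiset γ) := by
    rw [Multiset.le_iff_count]
    intro a
    by_cases ha : a ∈ l
    · have h1 : Multiset.count a (l : Multiset γ) = 1 := by
        simpa using List.count_eq_one_of_mem hl ha
      have h2 : 1 ≤ Multiset.count a (m : Multiset γ) := by
        simpa using List.count_pos_iff.mpr (hsub a ha)
      omega
    · have : Multiset.count a (l : Multiset γ) = 0 := by
        simpa using List.count_eq_zero_of_not_mem ha
      omega
  have := Multiset.countP_le_of_le (fun x => p x = true) hms
  simpa using this

/-- the list of pairs of `M2` used by the composition -/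
def usedM2 (M1 M2 : List (ℕ × ℕ)) : List (ℕ × ℕ) :=
  M1.filterMap (fun p => M2.find? (fun q => q.1 == p.2))

lemma usedM2_nodup {M1 M2 : List (ℕ × ℕ)} (h1 : M1.Pairwise lt2) :
    (usedM2 M1 M2).Nodup := by
  rw [usedM2, List.Nodup, List.pairwise_filterMap]
  refine h1.imp_of_mem (fun {p p'} hp hp' hlt => ?_)
  intro b hb b' hb'
  have hq1 : b.1 = p.2 := by simpa using List.find?_some hb
  have hq1' : b'.1 = p'.2 := by simpa using List.find?_some hb'
  intro he; rw [he] at hq1; omega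

lemma usedM2_subset {M1 M2 : List (ℕ × ℕ)} : ∀ x ∈ usedM2 M1 M2, x ∈ M2 := by
  intro x hx
  obtain ⟨p, _, hf⟩ := List.mem_filterMap.mp hx
  exact List.mem_of_find?_eq_some hf

lemma comp_countP_le (M2 : List (ℕ × ℕ)) (q q1 q2 : ℕ × ℕ → Bool)
    (hq : ∀ p r, M2.find? (fun r' => r'.1 == p.2) = some r →
      q (p.1, r.2) = true → q1 p = true ∨ q2 r = true) :
    ∀ M1 : List (ℕ × ℕ),
      (comp M1 M2).countP q ≤ M1.countP q1 + (usedM2 M1 M2).countP q2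
  | [] => by simp [comp, usedM2]
  | p :: M1 => by
    have ih := comp_countP_le M2 q q1 q2 hq M1
    cases hf : M2.find? (fun r' => r'.1 == p.2) with
    | none =>
      have e1 : comp (p :: M1) M2 = comp M1 M2 := by
        simp [comp, List.filterMap_cons, hf]
      have e2 : usedM2 (p :: M1) M2 = usedM2 M1 M2 := by
        simp [usedM2, List.filterMap_cons, hf]
      rw [e1, e2, List.countP_cons]
      omega
    | some r =>
      have e1 : comp (p :: M1) M2 = (p.1, r.2) :: comp M1 M2 := by
        simp [comp, List.filterMap_cons, hf]
      have e2 : usedM2 (p :: M1) M2 = r :: usedM2 M1 M2 := by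
        simp [usedM2, List.filterMap_cons, hf]
      rw [e1, e2, List.countP_cons, List.countP_cons, List.countP_cons]
      by_cases hqq : q (p.1, r.2) = true
      · rcases hq p r hf hqq with h | h <;> simp [hqq, h] <;> omega
      · have h0 : q (p.1, r.2) = false := by simpa using hqq
        simp [h0]; omega

end TedAux
namespace TedAux
open List

variable {α : Type} [DecidableEq α]

theorem treeAligned_comp {F G H : List (LTree α)} {M1 M2 : List (ℕ × ℕ)} (d : Bool × α)
    (ta1 : TreeAligned F G M1) (ta2 : TreeAligned G H M2) :
    TreeAligned F H (comp M1 M2) ∧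
      alignCost (pforest F) (pforest H) d (comp M1 M2) ≤
        alignCost (pforest F) (pforest G) d M1 + alignCost (pforest G) (pforest H) d M2 := by
  obtain ⟨hm1, hb1, hc1⟩ := ta1
  obtain ⟨hm2, hb2, hc2⟩ := ta2
  rw [isMatching_iff] at hm1 hm2
  constructor
  · refine ⟨isMatching_iff.mpr (comp_pairwise hm1 hm2), ?_, ?_⟩
    · intro r hr
      obtain ⟨j, hj1, hj2⟩ := (mem_comp hm2).mp hr
      exact ⟨(hb1 _ hj1).1, (hb2 _ hj2).2⟩
    · intro a ou cu ha
      rcases hc1 a ou cu ha with hleft | ⟨b, ov, cv, hb, hoM1, hcM1⟩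
      · left
        intro r hr
        obtain ⟨j, hj1, hj2⟩ := (mem_comp hm2).mp hr
        exact hleft (r.1, j) hj1
      · rcases hc2 b ov cv hb with hleft | ⟨e, ow, cw, he, hoM2, hcM2⟩
        · left
          intro r hr
          obtain ⟨j, hj1, hj2⟩ := (mem_comp hm2).mp hr
          constructor
          · intro hru
            have hpe : (r.1, j) = (ou, ov) := mem_fst_inj hm1 hj1 hoM1 (by simpa using hru)
            have hj : j = ov := by simpa using congrArg Prod.snd hpe
            rw [hj] at hj2
            exact ((hleft _ hj2).1 rfl).elim
          · intro hru
            have hpe : (r.1, j) = (cu, cv) := mem_fst_inj hm1 hj1 hcM1 (by simpa using hru)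
            have hj : j = cv := by simpa using congrArg Prod.snd hpe
            rw [hj] at hj2
            exact ((hleft _ hj2).2 rfl).elim
        · exact Or.inr ⟨e, ow, cw, he, (mem_comp hm2).mpr ⟨ov, hoM1, hoM2⟩,
            (mem_comp hm2).mpr ⟨cv, hcM1, hcM2⟩⟩
  · have hlen1F : M1.length ≤ (pforest F).length :=
      matching_length_le_fst hm1 (fun p hp => (hb1 p hp).1)
    have hlen1G : M1.length ≤ (pforest G).length :=
      matching_length_le_snd hm1 (fun p hp => (hb1 p hp).2)
    have hlen2G : M2.length ≤ (pforest G).length :=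
      matching_length_le_fst hm2 (fun p hp => (hb2 p hp).1)
    have hlen2H : M2.length ≤ (pforest H).length :=
      matching_length_le_snd hm2 (fun p hp => (hb2 p hp).2)
    have hcard := comp_card (n := (pforest G).length) hm1 hm2
      (fun p hp => (hb1 p hp).2) (fun p hp => (hb2 p hp).1)
    have hclen : (comp M1 M2).length ≤ M1.length := List.length_filterMap_le _ _
    simp only [alignCost]
    set q : ℕ × ℕ → Bool :=
      fun p => decide ((pforest F).getD p.1 d ≠ (pforest H).getD p.2 d) with hq
    set q1 : ℕ × ℕ → Bool :=
      fun p => decide ((pforest F).getD p.1 d ≠ (pforest G).getD p.2 d) with hq1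
    set q2 : ℕ × ℕ → Bool :=
      fun p => decide ((pforest G).getD p.1 d ≠ (pforest H).getD p.2 d) with hq2
    have hmis : (comp M1 M2).countP q ≤ M1.countP q1 + (usedM2 M1 M2).countP q2 := by
      refine comp_countP_le M2 q q1 q2 (fun p r hf hqt => ?_) M1
      have hr1 : r.1 = p.2 := by simpa using List.find?_some hf
      by_cases hc : q1 p = true
      · exact Or.inl hc
      · right
        simp only [hq1, decide_eq_true_eq, not_not] at hc
        simp only [hq, decide_eq_true_eq] at hqt
        simp only [hq2, decide_eq_true_eq]
        rw [hr1, ← hc]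
        exact hqt
    have hmis2 : (usedM2 M1 M2).countP q2 ≤ M2.countP q2 :=
      countP_le_of_subset_nodup (usedM2_nodup hm1) usedM2_subset q2
    omega

end TedAux
namespace TedAux
open List

variable {α : Type} {β : Type}

lemma getD_app_l (A B : List β) (d : β) {n : ℕ} (hn : n < A.length) :
    (A ++ B).getD n d = A.getD n d :=
  List.getD_append A B d n hn

lemma getD_app_r (A B : List β) (d : β) (i : ℕ) :
    (A ++ B).getD (A.length + i) d = B.getD i d := by
  have h : A.length + i - A.length = i := by omega
  simp only [List.getD, List.getD_eq_getElem?_getD,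
    List.getElem?_append_right (by omega : A.length ≤ A.length + i), h]

lemma getD_app_r' (A B : List β) (d : β) {n : ℕ} (hn : A.length ≤ n) :
    (A ++ B).getD n d = B.getD (n - A.length) d := by
  have : n = A.length + (n - A.length) := by omega
  rw [this, getD_app_r]
  congr 1
  omega

/-- identity block of size `n` at offsets `(x, y)` -/
def idA (x y n : ℕ) : List (ℕ × ℕ) := (List.range n).map (fun i => (i + x, i + y))

@[simp] lemma idA_length (x y n : ℕ) : (idA x y n).length = n := by simp [idA]

lemma mem_idA {x y n : ℕ} {p : ℕ × ℕ} :
    p ∈ idA x y n ↔ ∃ i < n, p = (i + x, i + y) := by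
  simp [idA, List.mem_map, eq_comm]

lemma idA_pairwise (x y n : ℕ) : (idA x y n).Pairwise lt2 := by
  rw [idA, List.pairwise_map]
  exact (List.pairwise_lt_range (n := n)).imp (fun h => by constructor <;> simp <;> omega)

lemma idA_countP (x y n : ℕ) (q : ℕ × ℕ → Bool) :
    (idA x y n).countP q = (List.range n).countP (fun i => q (i + x, i + y)) := by
  rw [idA, List.countP_map]; rfl

/-- shifted matching -/
def shiftM (x y : ℕ) (M : List (ℕ × ℕ)) : List (ℕ × ℕ) :=
  M.map (fun p => (p.1 + x, p.2 + y))

@[simp] lemma shiftM_length (x y : ℕ) (M : List (ℕ × ℕ)) :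
    (shiftM x y M).length = M.length := by simp [shiftM]

lemma mem_shiftM {x y : ℕ} {M : List (ℕ × ℕ)} {p : ℕ × ℕ} :
    p ∈ shiftM x y M ↔ ∃ r ∈ M, p = (r.1 + x, r.2 + y) := by
  simp [shiftM, List.mem_map, eq_comm]

lemma shiftM_pairwise {x y : ℕ} {M : List (ℕ × ℕ)} (h : M.Pairwise lt2) :
    (shiftM x y M).Pairwise lt2 := by
  rw [shiftM, List.pairwise_map]
  exact h.imp (fun hab => ⟨by simp; omega, by simp; omega⟩)

lemma shiftM_countP (x y : ℕ) (M : List (ℕ × ℕ)) (q : ℕ × ℕ → Bool) :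
    (shiftM x y M).countP q = M.countP (fun p => q (p.1 + x, p.2 + y)) := by
  rw [shiftM, List.countP_map]; rfl

/-- identity tree alignment -/
lemma base_id (F : List (LTree α)) :
    TreeAligned F F (idA 0 0 (pforest F).length) := by
  refine ⟨isMatching_iff.mpr (idA_pairwise _ _ _), ?_, ?_⟩
  · intro p hp
    obtain ⟨i, hi, rfl⟩ := mem_idA.mp hp
    simp; omega
  · intro a ou cu ha
    have hb := npairs_bounds F ⟨a, ha⟩
    exact Or.inr ⟨a, ou, cu, ha, mem_idA.mpr ⟨ou, by omega, by simp⟩,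
      mem_idA.mpr ⟨cu, by omega, by simp⟩⟩

lemma base_id_cost [DecidableEq α] (F : List (LTree α)) (d : Bool × α) :
    alignCost (pforest F) (pforest F) d (idA 0 0 (pforest F).length) = 0 := by
  simp only [alignCost, idA_length, Nat.sub_self, idA_countP]
  rw [List.countP_eq_zero.mpr]
  intro i _
  simp

end TedAux
namespace TedAux
open List

variable {α : Type} [DecidableEq α]

theorem lift_context (d : Bool × α) {F G : List (LTree α)} {M : List (ℕ × ℕ)}
    (pre post : List (LTree α)) (h : TreeAligned F G M) :
    ∃ M', TreeAligned (pre ++ F ++ post) (pre ++ G ++ post) M' ∧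
      alignCost (pforest (pre ++ F ++ post)) (pforest (pre ++ G ++ post)) d M' =
        alignCost (pforest F) (pforest G) d M := by
  obtain ⟨hm, hb, hcond⟩ := h
  rw [isMatching_iff] at hm
  have hs1 : pforest (pre ++ F ++ post) = (pforest pre ++ pforest F) ++ pforest post := by
    rw [pforest_append, pforest_append]
  have hs2 : pforest (pre ++ G ++ post) = (pforest pre ++ pforest G) ++ pforest post := by
    rw [pforest_append, pforest_append]
  have hlen1 : (pforest (pre ++ F ++ post)).length =
      (pforest pre).length + (pforest F).length + (pforest post).length := by
    rw [hs1]; simp; omega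
  have hlen2 : (pforest (pre ++ G ++ post)).length =
      (pforest pre).length + (pforest G).length + (pforest post).length := by
    rw [hs2]; simp; omega
  have hB1 : ∀ p ∈ idA 0 0 (pforest pre).length,
      p.1 < (pforest pre).length ∧ p.2 < (pforest pre).length := by
    intro p hp; obtain ⟨i, hi, rfl⟩ := mem_idA.mp hp; simp; omega
  have hB2 : ∀ p ∈ shiftM (pforest pre).length (pforest pre).length M,
      ((pforest pre).length ≤ p.1 ∧ p.1 < (pforest pre).length + (pforest F).length) ∧
      ((pforest pre).length ≤ p.2 ∧ p.2 < (pforest pre).length + (pforest G).length) := by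
    intro p hp; obtain ⟨r, hr, rfl⟩ := mem_shiftM.mp hp
    have := hb r hr; simp; omega
  have hB3 : ∀ p ∈ idA ((pforest pre).length + (pforest F).length)
      ((pforest pre).length + (pforest G).length) (pforest post).length,
      ((pforest pre).length + (pforest F).length ≤ p.1 ∧
        p.1 < (pforest pre).length + (pforest F).length + (pforest post).length) ∧
      ((pforest pre).length + (pforest G).length ≤ p.2 ∧
        p.2 < (pforest pre).length + (pforest G).length + (pforest post).length) := by
    intro p hp; obtain ⟨i, hi, rfl⟩ := mem_idA.mp hp; simp; omega
  have c1 : ∀ i, i < (pforest pre).length →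
      (pforest (pre ++ F ++ post)).getD i d = (pforest pre).getD i d := by
    intro i hi
    rw [hs1, getD_app_l _ _ _ (by simp; omega), getD_app_l _ _ _ (by omega)]
  have c1' : ∀ i, i < (pforest pre).length →
      (pforest (pre ++ G ++ post)).getD i d = (pforest pre).getD i d := by
    intro i hi
    rw [hs2, getD_app_l _ _ _ (by simp; omega), getD_app_l _ _ _ (by omega)]
  have c2 : ∀ i, i < (pforest F).length →
      (pforest (pre ++ F ++ post)).getD (i + (pforest pre).length) d =
        (pforest F).getD i d := by
    intro i hi
    rw [hs1, getD_app_l _ _ _ (by simp; omega)]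
    have he : i + (pforest pre).length = (pforest pre).length + i := by omega
    rw [he, getD_app_r]
  have c2' : ∀ i, i < (pforest G).length →
      (pforest (pre ++ G ++ post)).getD (i + (pforest pre).length) d =
        (pforest G).getD i d := by
    intro i hi
    rw [hs2, getD_app_l _ _ _ (by simp; omega)]
    have he : i + (pforest pre).length = (pforest pre).length + i := by omega
    rw [he, getD_app_r]
  have c3 : ∀ i : ℕ,
      (pforest (pre ++ F ++ post)).getD
        (i + ((pforest pre).length + (pforest F).length)) d = (pforest post).getD i d := by
    intro i
    rw [hs1]
    have he : i + ((pforest pre).length + (pforest F).length) =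
        (pforest pre ++ pforest F).length + i := by simp; omega
    rw [he, getD_app_r]
  have c3' : ∀ i : ℕ,
      (pforest (pre ++ G ++ post)).getD
        (i + ((pforest pre).length + (pforest G).length)) d = (pforest post).getD i d := by
    intro i
    rw [hs2]
    have he : i + ((pforest pre).length + (pforest G).length) =
        (pforest pre ++ pforest G).length + i := by simp; omega
    rw [he, getD_app_r]
  have hMleF : M.length ≤ (pforest F).length :=
    matching_length_le_fst hm (fun p hp => (hb p hp).1)
  have hMleG : M.length ≤ (pforest G).length :=
    matching_length_le_snd hm (fun p hp => (hb p hp).2)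
  refine ⟨idA 0 0 (pforest pre).length ++
      (shiftM (pforest pre).length (pforest pre).length M ++
        idA ((pforest pre).length + (pforest F).length)
          ((pforest pre).length + (pforest G).length) (pforest post).length),
    ⟨?_, ?_, ?_⟩, ?_⟩
  · rw [isMatching_iff]
    refine List.pairwise_append.mpr ⟨idA_pairwise _ _ _,
      List.pairwise_append.mpr ⟨shiftM_pairwise hm, idA_pairwise _ _ _, ?_⟩, ?_⟩
    · intro p hp q hq
      have h1 := hB2 p hp; have h2 := hB3 q hq
      exact ⟨by omega, by omega⟩
    · intro p hp q hq
      have h1 := hB1 p hp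
      rcases List.mem_append.mp hq with hq | hq
      · have h2 := hB2 q hq; exact ⟨by omega, by omega⟩
      · have h2 := hB3 q hq; exact ⟨by omega, by omega⟩
  · intro p hp
    rw [hlen1, hlen2]
    rcases List.mem_append.mp hp with hp | hp
    · have := hB1 p hp; omega
    · rcases List.mem_append.mp hp with hp | hp
      · have := hB2 p hp; omega
      · have := hB3 p hp; omega
  · intro a ou cu ha
    rcases npairs_append.mp ⟨a, ha⟩ with hpf | ⟨o1, c1'', hpost, ho, hc⟩
    · rcases npairs_append.mp hpf with hpre | ⟨o0, c0, hF, ho, hc⟩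
      · have hbnd := npairs_bounds pre hpre
        obtain ⟨b, hbeq⟩ : NPairs (pre ++ G ++ post) ou cu :=
          npairs_append.mpr (Or.inl (npairs_append.mpr (Or.inl hpre)))
        refine Or.inr ⟨b, ou, cu, hbeq, ?_, ?_⟩
        · exact List.mem_append.mpr (Or.inl (mem_idA.mpr ⟨ou, by omega, by simp⟩))
        · exact List.mem_append.mpr (Or.inl (mem_idA.mpr ⟨cu, by omega, by simp⟩))
      · subst ho hc
        have hbnd := npairs_bounds F hF
        obtain ⟨a0, ha0⟩ := hF
        rcases hcond a0 o0 c0 ha0 with hleft | ⟨b0, ov, cv, hb0, hoM, hcM⟩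
        · left
          intro q hq
          rcases List.mem_append.mp hq with hq | hq
          · have := hB1 q hq; exact ⟨by omega, by omega⟩
          · rcases List.mem_append.mp hq with hq | hq
            · obtain ⟨r, hr, rfl⟩ := mem_shiftM.mp hq
              have := hleft r hr
              exact ⟨by simp; omega, by simp; omega⟩
            · have := hB3 q hq; exact ⟨by omega, by omega⟩
        · have hbnd' := npairs_bounds G ⟨b0, hb0⟩
          obtain ⟨b, hbeq⟩ : NPairs (pre ++ G ++ post)
              (ov + (pforest pre).length) (cv + (pforest pre).length) :=
            npairs_append.mpr (Or.inl (npairs_append.mpr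
              (Or.inr ⟨ov, cv, ⟨b0, hb0⟩, rfl, rfl⟩)))
          refine Or.inr ⟨b, _, _, hbeq, ?_, ?_⟩
          · exact List.mem_append.mpr (Or.inr (List.mem_append.mpr (Or.inl
              (mem_shiftM.mpr ⟨(o0, ov), hoM, rfl⟩))))
          · exact List.mem_append.mpr (Or.inr (List.mem_append.mpr (Or.inl
              (mem_shiftM.mpr ⟨(c0, cv), hcM, rfl⟩))))
    · subst ho hc
      have hbnd := npairs_bounds post hpost
      have hlenpf : (pforest (pre ++ F)).length =
          (pforest pre).length + (pforest F).length := by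
        rw [pforest_append]; simp
      obtain ⟨b, hbeq⟩ : NPairs (pre ++ G ++ post)
          (o1 + ((pforest pre).length + (pforest G).length))
          (c1'' + ((pforest pre).length + (pforest G).length)) := by
        refine npairs_append.mpr (Or.inr ⟨o1, c1'', hpost, ?_, ?_⟩) <;>
          · rw [pforest_append]; simp
      refine Or.inr ⟨b, _, _, hbeq, ?_, ?_⟩
      · refine List.mem_append.mpr (Or.inr (List.mem_append.mpr (Or.inr
          (mem_idA.mpr ⟨o1, by omega, ?_⟩))))
        rw [hlenpf]
      · refine List.mem_append.mpr (Or.inr (List.mem_append.mpr (Or.inr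
          (mem_idA.mpr ⟨c1'', by omega, ?_⟩))))
        rw [hlenpf]
  · have hz1 : (idA 0 0 (pforest pre).length).countP
        (fun p => decide ((pforest (pre ++ F ++ post)).getD p.1 d ≠
          (pforest (pre ++ G ++ post)).getD p.2 d)) = 0 := by
      rw [List.countP_eq_zero]
      intro p hp
      obtain ⟨i, hi, rfl⟩ := mem_idA.mp hp
      simp only [decide_eq_true_eq, not_not, Nat.add_zero]
      rw [c1 i hi, c1' i hi]
    have hz3 : (idA ((pforest pre).length + (pforest F).length)
        ((pforest pre).length + (pforest G).length) (pforest post).length).countP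
        (fun p => decide ((pforest (pre ++ F ++ post)).getD p.1 d ≠
          (pforest (pre ++ G ++ post)).getD p.2 d)) = 0 := by
      rw [List.countP_eq_zero]
      intro p hp
      obtain ⟨i, hi, rfl⟩ := mem_idA.mp hp
      simp only [decide_eq_true_eq, not_not]
      rw [c3 i, c3' i]
    have hz2 : (shiftM (pforest pre).length (pforest pre).length M).countP
        (fun p => decide ((pforest (pre ++ F ++ post)).getD p.1 d ≠
          (pforest (pre ++ G ++ post)).getD p.2 d)) =
        M.countP (fun p => decide ((pforest F).getD p.1 d ≠ (pforest G).getD p.2 d)) := by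
      rw [shiftM_countP]
      refine List.countP_congr (fun r hr => ?_)
      have hbr := hb r hr
      simp only [decide_eq_true_eq]
      rw [c2 r.1 hbr.1, c2' r.2 hbr.2]
    simp only [alignCost]
    rw [List.countP_append, List.countP_append, hz1, hz2, hz3,
      List.length_append, List.length_append, idA_length, idA_length, shiftM_length,
      hlen1, hlen2]
    omega

end TedAux
namespace TedAux
open List

variable {α : Type} [DecidableEq α]

@[simp] lemma pforest_singleton (t : LTree α) : pforest [t] = pstr t := by simp

lemma npairs_single {t : LTree α} {o c : ℕ} : NPairs [t] o c ↔ TPairs t o c := by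
  rw [npairs_cons]
  constructor
  · rintro (h | ⟨o', c', h, _, _⟩)
    · exact h
    · exact absurd h (npairs_nil o' c')
  · exact Or.inl

lemma count_range_le_one (n x : ℕ) : (List.range n).countP (fun i => i == x) ≤ 1 := by
  have := List.nodup_iff_count_le_one.mp (List.nodup_range (n := n)) x
  simpa [List.count] using this

lemma base_relabel (d : Bool × α) (a b : α) (ts : List (LTree α)) :
    ∃ M, TreeAligned [LTree.node a ts] [LTree.node b ts] M ∧
      alignCost (pforest [LTree.node a ts]) (pforest [LTree.node b ts]) d M ≤ 2 := by
  set n0 := (pforest ts).length with hn0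
  have hlen1 : (pforest [LTree.node a ts]).length = n0 + 2 := by simp [hn0]
  have hlen2 : (pforest [LTree.node b ts]).length = n0 + 2 := by simp [hn0]
  refine ⟨idA 0 0 (n0 + 2), ⟨isMatching_iff.mpr (idA_pairwise _ _ _), ?_, ?_⟩, ?_⟩
  · intro p hp
    obtain ⟨i, hi, rfl⟩ := mem_idA.mp hp
    rw [hlen1, hlen2]; simp; omega
  · intro a0 ou cu ha
    have hnp : NPairs [LTree.node a ts] ou cu := ⟨a0, ha⟩
    have hnp2 : NPairs [LTree.node b ts] ou cu := by
      rcases tpairs_node.mp (npairs_single.mp hnp) with h | h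
      · exact npairs_single.mpr (tpairs_node.mpr (Or.inl h))
      · exact npairs_single.mpr (tpairs_node.mpr (Or.inr h))
    have hbnd := npairs_bounds _ hnp
    rw [hlen1] at hbnd
    obtain ⟨b0, hb0⟩ := hnp2
    exact Or.inr ⟨b0, ou, cu, hb0, mem_idA.mpr ⟨ou, by omega, by simp⟩,
      mem_idA.mpr ⟨cu, by omega, by simp⟩⟩
  · simp only [alignCost, idA_length, hlen1, hlen2, Nat.sub_self, idA_countP]
    have hmono : (List.range (n0 + 2)).countP
        (fun i => decide ((pforest [LTree.node a ts]).getD (i + 0) d ≠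
          (pforest [LTree.node b ts]).getD (i + 0) d)) ≤
        (List.range (n0 + 2)).countP (fun i => (i == 0) || (i == n0 + 1)) := by
      refine List.countP_mono_left (fun i hi hp => ?_)
      rw [List.mem_range] at hi
      by_contra hcon
      simp only [Bool.or_eq_true, beq_iff_eq, not_or] at hcon
      obtain ⟨h0, h1⟩ := hcon
      apply absurd hp
      simp only [decide_eq_true_eq, not_not, Nat.add_zero]
      obtain ⟨i', rfl⟩ : ∃ i', i = i' + 1 := ⟨i - 1, by omega⟩
      have hi' : i' < n0 := by omega
      simp only [pforest_singleton, pstr_node, List.getD_cons_succ]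
      rw [getD_app_l _ _ _ (by omega), getD_app_l _ _ _ (by omega)]
    have hsplit := countP_disj_le (List.range (n0 + 2))
      (fun i => i == 0) (fun i => i == n0 + 1)
    have hc1 := count_range_le_one (n0 + 2) 0
    have hc2 := count_range_le_one (n0 + 2) (n0 + 1)
    omega

lemma base_delete (d : Bool × α) (a : α) (ts : List (LTree α)) :
    ∃ M, TreeAligned [LTree.node a ts] ts M ∧
      alignCost (pforest [LTree.node a ts]) (pforest ts) d M ≤ 2 := by
  set n0 := (pforest ts).length with hn0
  have hlen1 : (pforest [LTree.node a ts]).length = n0 + 2 := by simp [hn0]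
  refine ⟨idA 1 0 n0, ⟨isMatching_iff.mpr (idA_pairwise _ _ _), ?_, ?_⟩, ?_⟩
  · intro p hp
    obtain ⟨i, hi, rfl⟩ := mem_idA.mp hp
    rw [hlen1]; simp; omega
  · intro a0 ou cu ha
    have hnp : NPairs [LTree.node a ts] ou cu := ⟨a0, ha⟩
    rcases tpairs_node.mp (npairs_single.mp hnp) with ⟨rfl, rfl⟩ | ⟨o0, c0, h0, rfl, rfl⟩
    · left
      intro q hq
      obtain ⟨i, hi, rfl⟩ := mem_idA.mp hq
      have : n0 = 2 * fsize ts := by rw [hn0, length_pforest]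
      constructor <;> simp <;> omega
    · have hbnd := npairs_bounds _ h0
      obtain ⟨b0, hb0⟩ := h0
      exact Or.inr ⟨b0, o0, c0, hb0, mem_idA.mpr ⟨o0, by omega, by simp⟩,
        mem_idA.mpr ⟨c0, by omega, by simp⟩⟩
  · have hz : (idA 1 0 n0).countP
        (fun p => decide ((pforest [LTree.node a ts]).getD p.1 d ≠
          (pforest ts).getD p.2 d)) = 0 := by
      rw [idA_countP, List.countP_eq_zero]
      intro i hi
      rw [List.mem_range] at hi
      simp only [decide_eq_true_eq, not_not, Nat.add_zero]
      simp only [pforest_singleton, pstr_node, List.getD_cons_succ]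
      rw [getD_app_l _ _ _ (by omega)]
    simp only [alignCost, idA_length, hlen1, hz]
    omega

lemma base_insert (d : Bool × α) (a : α) (ts : List (LTree α)) :
    ∃ M, TreeAligned ts [LTree.node a ts] M ∧
      alignCost (pforest ts) (pforest [LTree.node a ts]) d M ≤ 2 := by
  set n0 := (pforest ts).length with hn0
  have hlen2 : (pforest [LTree.node a ts]).length = n0 + 2 := by simp [hn0]
  refine ⟨idA 0 1 n0, ⟨isMatching_iff.mpr (idA_pairwise _ _ _), ?_, ?_⟩, ?_⟩
  · intro p hp
    obtain ⟨i, hi, rfl⟩ := mem_idA.mp hp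
    rw [hlen2]; simp; omega
  · intro a0 ou cu ha
    have hnp : NPairs ts ou cu := ⟨a0, ha⟩
    have hbnd := npairs_bounds _ hnp
    have hnp2 : NPairs [LTree.node a ts] (ou + 1) (cu + 1) :=
      npairs_single.mpr (tpairs_node.mpr (Or.inr ⟨ou, cu, hnp, rfl, rfl⟩))
    obtain ⟨b0, hb0⟩ := hnp2
    exact Or.inr ⟨b0, ou + 1, cu + 1, hb0, mem_idA.mpr ⟨ou, by omega, by simp⟩,
      mem_idA.mpr ⟨cu, by omega, by simp⟩⟩
  · have hz : (idA 0 1 n0).countP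
        (fun p => decide ((pforest ts).getD p.1 d ≠
          (pforest [LTree.node a ts]).getD p.2 d)) = 0 := by
      rw [idA_countP, List.countP_eq_zero]
      intro i hi
      rw [List.mem_range] at hi
      simp only [decide_eq_true_eq, not_not, Nat.add_zero]
      simp only [pforest_singleton, pstr_node, List.getD_cons_succ]
      rw [getD_app_l _ _ _ (by omega)]
    simp only [alignCost, idA_length, hlen2, hz]
    omega

lemma base_wrap (d : Bool × α) (a : α) {ts ts' : List (LTree α)} {M : List (ℕ × ℕ)}
    (h : TreeAligned ts ts' M) :
    ∃ M', TreeAligned [LTree.node a ts] [LTree.node a ts'] M' ∧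
      alignCost (pforest [LTree.node a ts]) (pforest [LTree.node a ts']) d M' =
        alignCost (pforest ts) (pforest ts') d M := by
  obtain ⟨hm, hb, hcond⟩ := h
  rw [isMatching_iff] at hm
  set L1 := (pforest ts).length with hL1
  set L2 := (pforest ts').length with hL2
  have hlen1 : (pforest [LTree.node a ts]).length = L1 + 2 := by simp [hL1]
  have hlen2 : (pforest [LTree.node a ts']).length = L2 + 2 := by simp [hL2]
  have c0 : (pforest [LTree.node a ts]).getD 0 d = (true, a) := by simp
  have c0' : (pforest [LTree.node a ts']).getD 0 d = (true, a) := by simp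
  have cmid : ∀ i, i < L1 →
      (pforest [LTree.node a ts]).getD (i + 1) d = (pforest ts).getD i d := by
    intro i hi
    simp only [pforest_singleton, pstr_node, List.getD_cons_succ]
    rw [getD_app_l _ _ _ (by omega)]
  have cmid' : ∀ i, i < L2 →
      (pforest [LTree.node a ts']).getD (i + 1) d = (pforest ts').getD i d := by
    intro i hi
    simp only [pforest_singleton, pstr_node, List.getD_cons_succ]
    rw [getD_app_l _ _ _ (by omega)]
  have cend : (pforest [LTree.node a ts]).getD (L1 + 1) d = (false, a) := by
    simp only [pforest_singleton, pstr_node, List.getD_cons_succ]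
    have := getD_app_r (pforest ts) [(false, a)] d 0
    simp [hL1]
  have cend' : (pforest [LTree.node a ts']).getD (L2 + 1) d = (false, a) := by
    simp only [pforest_singleton, pstr_node, List.getD_cons_succ]
    have := getD_app_r (pforest ts') [(false, a)] d 0
    simp [hL2]
  have hMle1 : M.length ≤ L1 := matching_length_le_fst hm (fun p hp => (hb p hp).1)
  have hMle2 : M.length ≤ L2 := matching_length_le_snd hm (fun p hp => (hb p hp).2)
  refine ⟨idA 0 0 1 ++ (shiftM 1 1 M ++ idA (L1 + 1) (L2 + 1) 1), ⟨?_, ?_, ?_⟩, ?_⟩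
  · rw [isMatching_iff]
    refine List.pairwise_append.mpr ⟨idA_pairwise _ _ _,
      List.pairwise_append.mpr ⟨shiftM_pairwise hm, idA_pairwise _ _ _, ?_⟩, ?_⟩
    · intro p hp q hq
      obtain ⟨r, hr, rfl⟩ := mem_shiftM.mp hp
      obtain ⟨i, hi, rfl⟩ := mem_idA.mp hq
      have := hb r hr
      exact ⟨by simp; omega, by simp; omega⟩
    · intro p hp q hq
      obtain ⟨i, hi, rfl⟩ := mem_idA.mp hp
      have hi0 : i = 0 := by omega
      rcases List.mem_append.mp hq with hq | hq
      · obtain ⟨r, hr, rfl⟩ := mem_shiftM.mp hq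
        exact ⟨by simp; omega, by simp; omega⟩
      · obtain ⟨j, hj, rfl⟩ := mem_idA.mp hq
        exact ⟨by simp; omega, by simp; omega⟩
  · intro p hp
    rw [hlen1, hlen2]
    rcases List.mem_append.mp hp with hp | hp
    · obtain ⟨i, hi, rfl⟩ := mem_idA.mp hp; simp; omega
    · rcases List.mem_append.mp hp with hp | hp
      · obtain ⟨r, hr, rfl⟩ := mem_shiftM.mp hp
        have := hb r hr
        simp; omega
      · obtain ⟨i, hi, rfl⟩ := mem_idA.mp hp; simp; omega
  · intro a0 ou cu ha
    have hnp : NPairs [LTree.node a ts] ou cu := ⟨a0, ha⟩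
    rcases tpairs_node.mp (npairs_single.mp hnp) with ⟨rfl, rfl⟩ | ⟨o0, c0'', h0, rfl, rfl⟩
    · have hroot : NPairs [LTree.node a ts'] 0 (2 * fsize ts' + 1) :=
        npairs_single.mpr (tpairs_node.mpr (Or.inl ⟨rfl, rfl⟩))
      obtain ⟨b0, hb0⟩ := hroot
      refine Or.inr ⟨b0, 0, 2 * fsize ts' + 1, hb0, ?_, ?_⟩
      · exact List.mem_append.mpr (Or.inl (mem_idA.mpr ⟨0, by omega, by simp⟩))
      · refine List.mem_append.mpr (Or.inr (List.mem_append.mpr (Or.inr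
          (mem_idA.mpr ⟨0, by omega, ?_⟩))))
        have e1 : 2 * fsize ts + 1 = 0 + (L1 + 1) := by rw [hL1, length_pforest]; omega
        have e2 : 2 * fsize ts' + 1 = 0 + (L2 + 1) := by rw [hL2, length_pforest]; omega
        rw [e1, e2]
    · have hbnd := npairs_bounds _ h0
      obtain ⟨a1, ha1⟩ := h0
      rcases hcond a1 o0 c0'' ha1 with hleft | ⟨b0, ov, cv, hb0, hoM, hcM⟩
      · left
        intro q hq
        rcases List.mem_append.mp hq with hq | hq
        · obtain ⟨i, hi, rfl⟩ := mem_idA.mp hq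
          exact ⟨by simp; omega, by simp; omega⟩
        · rcases List.mem_append.mp hq with hq | hq
          · obtain ⟨r, hr, rfl⟩ := mem_shiftM.mp hq
            have := hleft r hr
            exact ⟨by simp; omega, by simp; omega⟩
          · obtain ⟨i, hi, rfl⟩ := mem_idA.mp hq
            exact ⟨by simp; omega, by simp; omega⟩
      · have hbnd' := npairs_bounds ts' ⟨b0, hb0⟩
        have hnp2 : NPairs [LTree.node a ts'] (ov + 1) (cv + 1) :=
          npairs_single.mpr (tpairs_node.mpr (Or.inr ⟨ov, cv, ⟨b0, hb0⟩, rfl, rfl⟩))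
        obtain ⟨b1, hb1⟩ := hnp2
        refine Or.inr ⟨b1, ov + 1, cv + 1, hb1, ?_, ?_⟩
        · exact List.mem_append.mpr (Or.inr (List.mem_append.mpr (Or.inl
            (mem_shiftM.mpr ⟨(o0, ov), hoM, rfl⟩))))
        · exact List.mem_append.mpr (Or.inr (List.mem_append.mpr (Or.inl
            (mem_shiftM.mpr ⟨(c0'', cv), hcM, rfl⟩))))
  · have hz1 : (idA 0 0 1).countP
        (fun p => decide ((pforest [LTree.node a ts]).getD p.1 d ≠
          (pforest [LTree.node a ts']).getD p.2 d)) = 0 := by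
      rw [List.countP_eq_zero]
      intro p hp
      obtain ⟨i, hi, rfl⟩ := mem_idA.mp hp
      have : i = 0 := by omega
      subst this
      simp only [decide_eq_true_eq, not_not, Nat.add_zero]
      rw [c0, c0']
    have hz3 : (idA (L1 + 1) (L2 + 1) 1).countP
        (fun p => decide ((pforest [LTree.node a ts]).getD p.1 d ≠
          (pforest [LTree.node a ts']).getD p.2 d)) = 0 := by
      rw [List.countP_eq_zero]
      intro p hp
      obtain ⟨i, hi, rfl⟩ := mem_idA.mp hp
      have : i = 0 := by omega
      subst this
      simp only [decide_eq_true_eq, not_not, Nat.zero_add]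
      rw [cend, cend']
    have hz2 : (shiftM 1 1 M).countP
        (fun p => decide ((pforest [LTree.node a ts]).getD p.1 d ≠
          (pforest [LTree.node a ts']).getD p.2 d)) =
        M.countP (fun p => decide ((pforest ts).getD p.1 d ≠ (pforest ts').getD p.2 d)) := by
      rw [shiftM_countP]
      refine List.countP_congr (fun r hr => ?_)
      have hbr := hb r hr
      simp only [decide_eq_true_eq]
      rw [cmid r.1 hbr.1, cmid' r.2 hbr.2]
    simp only [alignCost]
    rw [List.countP_append, List.countP_append, hz1, hz2, hz3,
      List.length_append, List.length_append, idA_length, idA_length, shiftM_length,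
      hlen1, hlen2]
    omega

end TedAux
namespace TedAux
open List

variable {α : Type} [DecidableEq α]

theorem step_aligned (d : Bool × α) {F G : List (LTree α)} (h : FStep F G) :
    ∃ M, TreeAligned F G M ∧ alignCost (pforest F) (pforest G) d M ≤ 2 := by
  induction h with
  | relabel pre post ts a b =>
    obtain ⟨M0, h0, hc0⟩ := base_relabel d a b ts
    obtain ⟨M', h', hc'⟩ := lift_context d pre post h0
    have e1 : pre ++ [LTree.node a ts] ++ post = pre ++ LTree.node a ts :: post := by simp
    have e2 : pre ++ [LTree.node b ts] ++ post = pre ++ LTree.node b ts :: post := by simp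
    rw [e1, e2] at h' hc'
    exact ⟨M', h', by omega⟩
  | delete pre post ts a =>
    obtain ⟨M0, h0, hc0⟩ := base_delete d a ts
    obtain ⟨M', h', hc'⟩ := lift_context d pre post h0
    have e1 : pre ++ [LTree.node a ts] ++ post = pre ++ LTree.node a ts :: post := by simp
    rw [e1] at h' hc'
    exact ⟨M', h', by omega⟩
  | insert pre mid post a =>
    obtain ⟨M0, h0, hc0⟩ := base_insert d a mid
    obtain ⟨M', h', hc'⟩ := lift_context d pre post h0
    have e2 : pre ++ [LTree.node a mid] ++ post = pre ++ LTree.node a mid :: post := by simp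
    rw [e2] at h' hc'
    exact ⟨M', h', by omega⟩
  | congr pre post ts ts' a hstep ih =>
    obtain ⟨M0, h0, hc0⟩ := ih
    obtain ⟨M1, h1, hc1⟩ := base_wrap d a h0
    obtain ⟨M', h', hc'⟩ := lift_context d pre post h1
    have e1 : pre ++ [LTree.node a ts] ++ post = pre ++ LTree.node a ts :: post := by simp
    have e2 : pre ++ [LTree.node a ts'] ++ post = pre ++ LTree.node a ts' :: post := by simp
    rw [e1, e2] at h' hc'
    exact ⟨M', h', by omega⟩

theorem aligned_of_edits (d : Bool × α) {n : ℕ} {F G : List (LTree α)}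
    (h : FEdits n F G) :
    ∃ M, TreeAligned F G M ∧ alignCost (pforest F) (pforest G) d M ≤ 2 * n := by
  induction h with
  | refl F =>
    exact ⟨idA 0 0 (pforest F).length, base_id F, by rw [base_id_cost]⟩
  | @step n F G H s hrest ih =>
    obtain ⟨M2, h2, hc2⟩ := ih
    obtain ⟨M1, h1, hc1⟩ := step_aligned d s
    obtain ⟨hta, hcost⟩ := treeAligned_comp d h1 h2
    exact ⟨comp M1 M2, hta, by omega⟩

end TedAux
namespace TedAux
open List

variable {α : Type}

lemma tsize_pos (t : LTree α) : 1 ≤ tsize t := by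
  cases t; simp [tsize]

lemma fsize_eq_zero {F : List (LTree α)} (h : fsize F = 0) : F = [] := by
  cases F with
  | nil => rfl
  | cons t F =>
    exfalso
    have := tsize_pos t
    simp [fsize] at h
    omega

lemma inbounds_nil_left {G : List (LTree α)} {M : List (ℕ × ℕ)}
    (h : InBounds (pforest ([] : List (LTree α))) (pforest G) M) : M = [] := by
  rcases M with _ | ⟨p, M⟩
  · rfl
  · exfalso
    have := h p (List.mem_cons_self (a := p) (l := M))
    simp at this

lemma inbounds_nil_right {F : List (LTree α)} {M : List (ℕ × ℕ)}
    (h : InBounds (pforest F) (pforest ([] : List (LTree α))) M) : M = [] := by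
  rcases M with _ | ⟨p, M⟩
  · rfl
  · exfalso
    have := h p (List.mem_cons_self (a := p) (l := M))
    simp at this

section chars
variable (d : Bool × α) (x : α) (xs X' : List (LTree α))

lemma char_root_open : (pforest (LTree.node x xs :: X')).getD 0 d = (true, x) := by simp

lemma char_root_close :
    (pforest (LTree.node x xs :: X')).getD (2 * fsize xs + 1) d = (false, x) := by
  simp only [pforest_cons, pstr_node]
  rw [getD_app_l _ _ _ (by simp [length_pforest])]
  have : (2 : ℕ) * fsize xs + 1 = (pforest xs).length + 0 + 1 := by
    simp [length_pforest]
  rw [this, List.getD_cons_succ]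
  have := getD_app_r (pforest xs) [(false, x)] d 0
  simpa using this

lemma char_inner {i : ℕ} (h1 : 0 < i) (h2 : i < 2 * fsize xs + 1) :
    (pforest (LTree.node x xs :: X')).getD i d = (pforest xs).getD (i - 1) d := by
  obtain ⟨i', rfl⟩ : ∃ i', i = i' + 1 := ⟨i - 1, by omega⟩
  simp only [pforest_cons, pstr_node]
  rw [getD_app_l _ _ _ (by simp [length_pforest]; omega), List.getD_cons_succ,
    getD_app_l _ _ _ (by rw [length_pforest]; omega)]
  simp

lemma char_outer {i : ℕ} (h1 : 2 * fsize xs + 1 < i) :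
    (pforest (LTree.node x xs :: X')).getD i d =
      (pforest X').getD (i - (2 * fsize xs + 2)) d := by
  simp only [pforest_cons]
  rw [getD_app_r' _ _ _ (by simp [length_pforest]; omega)]
  congr 1
  simp [length_pforest]

end chars

lemma length_countP4 {γ : Type*} (q1 q2 q3 q4 : γ → Bool) :
    ∀ (L : List γ),
      (∀ x ∈ L, (q1 x).toNat + (q2 x).toNat + (q3 x).toNat + (q4 x).toNat = 1) →
      L.length = L.countP q1 + L.countP q2 + L.countP q3 + L.countP q4
  | [], _ => by simp
  | a :: L, h => by
    have ih := length_countP4 q1 q2 q3 q4 L (fun x hx => h x (List.mem_cons_of_mem a hx))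
    have ha := h a (List.mem_cons_self (a := a) (l := L))
    simp only [List.countP_cons, List.length_cons]
    cases hq1 : q1 a <;> cases hq2 : q2 a <;> cases hq3 : q3 a <;> cases hq4 : q4 a <;>
      simp [hq1, hq2, hq3, hq4] at ha ⊢ <;> omega

lemma countP_split4 {γ : Type*} (q q1 q2 q3 q4 : γ → Bool) (L : List γ)
    (h : ∀ x ∈ L, (q1 x).toNat + (q2 x).toNat + (q3 x).toNat + (q4 x).toNat = 1) :
    L.countP q = L.countP (fun x => q1 x && q x) + L.countP (fun x => q2 x && q x) +
      L.countP (fun x => q3 x && q x) + L.countP (fun x => q4 x && q x) := by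
  have := length_countP4 q1 q2 q3 q4 (L.filter q)
    (fun x hx => h x (List.mem_of_mem_filter hx))
  rw [← List.countP_eq_length_filter] at this
  rw [this, List.countP_filter, List.countP_filter, List.countP_filter, List.countP_filter]

lemma countP_fst_eq_le_one {M : List (ℕ × ℕ)} (hm : M.Pairwise lt2) (x : ℕ) :
    M.countP (fun p => decide (p.1 = x)) ≤ 1 := by
  induction M with
  | nil => simp
  | cons p M ih =>
    have hp := List.pairwise_cons.mp hm
    rw [List.countP_cons]
    by_cases h : p.1 = x
    · have hz : M.countP (fun q => decide (q.1 = x)) = 0 := by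
        rw [List.countP_eq_zero]
        intro q hq
        have := hp.1 q hq
        simp only [decide_eq_true_eq]
        omega
      simp [h, hz]
    · have := ih hp.2
      simp [h]
      omega

end TedAux
namespace TedAux
open List

variable {α : Type} [DecidableEq α]

lemma exactly_one_fst (ct : ℕ) (hct : 0 < ct) (x : ℕ × ℕ) :
    (decide (x.1 = 0)).toNat + ((decide (0 < x.1) && decide (x.1 < ct))).toNat +
      (decide (x.1 = ct)).toNat + (decide (ct < x.1)).toNat = 1 := by
  by_cases h1 : x.1 = 0 <;> by_cases h2 : x.1 < ct <;> by_cases h3 : x.1 = ct <;>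
    by_cases h4 : ct < x.1 <;> simp [h1, h2, h3, h4] <;> omega

theorem two_ted_le_aligned (d : Bool × α) :
    ∀ (N : ℕ) (F G : List (LTree α)) (M : List (ℕ × ℕ)),
      fsize F + fsize G ≤ N → TreeAligned F G M →
      2 * ted F G ≤ alignCost (pforest F) (pforest G) d M := by
  intro N
  induction N with
  | zero =>
    intro F G M hN h
    have hF : F = [] := fsize_eq_zero (by omega)
    have hG : G = [] := fsize_eq_zero (by omega)
    subst hF hG
    have : ted ([] : List (LTree α)) [] ≤ 0 := ted_le (FEdits.refl [])
    omega
  | succ N ih =>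
    intro F G M hN h
    obtain ⟨hm0, hb, hcond⟩ := h
    have hm : M.Pairwise lt2 := isMatching_iff.mp hm0
    cases F with
    | nil =>
      have hM : M = [] := inbounds_nil_left hb
      subst hM
      have h1 : ted ([] : List (LTree α)) G ≤ fsize G := ted_le (fedits_nil_to G)
      simp only [alignCost, List.length_nil, List.countP_nil, pforest_nil]
      rw [length_pforest]
      omega
    | cons t F' =>
    cases G with
    | nil =>
      have hM : M = [] := inbounds_nil_right hb
      subst hM
      have h1 : ted (t :: F') ([] : List (LTree α)) ≤ fsize (t :: F') :=
        ted_le (fedits_to_nil (t :: F'))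
      simp only [alignCost, List.length_nil, List.countP_nil, pforest_nil]
      rw [length_pforest]
      omega
    | cons s G' =>
    obtain ⟨a, ts⟩ := t
    obtain ⟨b, ss⟩ := s
    have hLts : (pforest ts).length = 2 * fsize ts := length_pforest ts
    have hLss : (pforest ss).length = 2 * fsize ss := length_pforest ss
    have hlenF : (pforest (LTree.node a ts :: F')).length =
        2 * fsize ts + 2 + (pforest F').length := by
      simp [length_pforest]; omega
    have hlenG : (pforest (LTree.node b ss :: G')).length =
        2 * fsize ss + 2 + (pforest G').length := by
      simp [length_pforest]; omega
    have hpstrF : (pstr (LTree.node a ts)).length = 2 * fsize ts + 2 := by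
      rw [length_pstr]; simp [tsize]; omega
    have hpstrG : (pstr (LTree.node b ss)).length = 2 * fsize ss + 2 := by
      rw [length_pstr]; simp [tsize]; omega
    have hrootF : NPairs (LTree.node a ts :: F') 0 (2 * fsize ts + 1) :=
      npairs_cons.mpr (Or.inl (tpairs_node.mpr (Or.inl ⟨rfl, rfl⟩)))
    obtain ⟨a0, ha0⟩ := hrootF
    rcases hcond a0 0 (2 * fsize ts + 1) ha0 with
      huntouch | ⟨b0, ov, cv, hb0, hoM, hcM⟩
    · -- CASE 1 : root of F untouched : delete it
      have huF : ∀ p ∈ M, p.1 ≠ 0 ∧ p.1 ≠ 2 * fsize ts + 1 := huntouch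
      set M1 := M.map (fun p =>
        (if p.1 < 2 * fsize ts + 1 then p.1 - 1 else p.1 - 2, p.2)) with hM1def
      have hbF : ∀ p ∈ M, p.1 < 2 * fsize ts + 2 + (pforest F').length := by
        intro p hp; have := (hb p hp).1; rwa [hlenF] at this
      have hsF1 : pforest (ts ++ F') = pforest ts ++ pforest F' := pforest_append ts F'
      have hlenF1 : (pforest (ts ++ F')).length = 2 * fsize ts + (pforest F').length := by
        rw [hsF1]; simp [hLts]
      have hch : ∀ p ∈ M, (pforest (ts ++ F')).getD
          (if p.1 < 2 * fsize ts + 1 then p.1 - 1 else p.1 - 2) d =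
          (pforest (LTree.node a ts :: F')).getD p.1 d := by
        intro p hp
        have h1 := huF p hp
        have h2 := hbF p hp
        split_ifs with hlt
        · rw [char_inner d a ts F' (by omega) (by omega), hsF1,
            getD_app_l _ _ _ (by omega)]
        · rw [char_outer d a ts F' (by omega), hsF1,
            getD_app_r' _ _ _ (by omega)]
          congr 1
          omega
      have hTA : TreeAligned (ts ++ F') (LTree.node b ss :: G') M1 := by
        refine ⟨?_, ?_, ?_⟩
        · rw [isMatching_iff, hM1def, List.pairwise_map]
          refine hm.imp_of_mem (fun {p q} hp hq hpq => ?_)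
          have h1 := huF p hp; have h2 := huF q hq
          have h3 := hbF p hp; have h4 := hbF q hq
          refine ⟨?_, hpq.2⟩
          dsimp only
          split_ifs <;> omega
        · intro q hq
          rw [hM1def] at hq
          obtain ⟨p, hp, rfl⟩ := List.mem_map.mp hq
          have h1 := huF p hp; have h2 := hbF p hp
          have h3 := (hb p hp).2
          rw [hlenF1]
          dsimp only
          constructor
          · split_ifs <;> omega
          · exact h3
        · intro a1 o c ha1
          rcases npairs_append.mp ⟨a1, ha1⟩ with hts | ⟨o0, c0, hF'p, rfl, rfl⟩
          · have hbnd := npairs_bounds ts hts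
            rw [hLts] at hbnd
            have hnpF : NPairs (LTree.node a ts :: F') (o + 1) (c + 1) :=
              npairs_cons.mpr (Or.inl (tpairs_node.mpr (Or.inr ⟨o, c, hts, rfl, rfl⟩)))
            obtain ⟨a2, ha2⟩ := hnpF
            rcases hcond a2 (o + 1) (c + 1) ha2 with hl | ⟨b1, ov1, cv1, hb1, ho1, hc1⟩
            · left
              intro q hq
              rw [hM1def] at hq
              obtain ⟨p, hp, rfl⟩ := List.mem_map.mp hq
              have h1 := hl p hp
              have h2 := huF p hp
              dsimp only
              constructor <;> (split_ifs <;> omega)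
            · right
              refine ⟨b1, ov1, cv1, hb1, ?_, ?_⟩
              · rw [hM1def]
                refine List.mem_map.mpr ⟨(o + 1, ov1), ho1, ?_⟩
                dsimp only
                rw [if_pos (by omega)]
                simp
              · rw [hM1def]
                refine List.mem_map.mpr ⟨(c + 1, cv1), hc1, ?_⟩
                dsimp only
                rw [if_pos (by omega)]
                simp
          · have hbnd := npairs_bounds F' hF'p
            have hnpF : NPairs (LTree.node a ts :: F')
                (o0 + (2 * fsize ts + 2)) (c0 + (2 * fsize ts + 2)) :=
              npairs_cons.mpr (Or.inr ⟨o0, c0, hF'p, by rw [hpstrF], by rw [hpstrF]⟩)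
            obtain ⟨a2, ha2⟩ := hnpF
            rcases hcond a2 _ _ ha2 with hl | ⟨b1, ov1, cv1, hb1, ho1, hc1⟩
            · left
              intro q hq
              rw [hM1def] at hq
              obtain ⟨p, hp, rfl⟩ := List.mem_map.mp hq
              have h1 := hl p hp
              have h2 := huF p hp
              have h3 := hbF p hp
              dsimp only
              constructor <;> (split_ifs <;> omega)
            · right
              refine ⟨b1, ov1, cv1, hb1, ?_, ?_⟩
              · rw [hM1def]
                refine List.mem_map.mpr ⟨(o0 + (2 * fsize ts + 2), ov1), ho1, ?_⟩
                dsimp only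
                rw [if_neg (by omega)]
                simp only [Prod.mk.injEq]
                exact ⟨by omega, trivial⟩
              · rw [hM1def]
                refine List.mem_map.mpr ⟨(c0 + (2 * fsize ts + 2), cv1), hc1, ?_⟩
                dsimp only
                rw [if_neg (by omega)]
                simp only [Prod.mk.injEq]
                exact ⟨by omega, trivial⟩
      have hIH : 2 * ted (ts ++ F') (LTree.node b ss :: G') ≤
          alignCost (pforest (ts ++ F')) (pforest (LTree.node b ss :: G')) d M1 := by
        refine ih (ts ++ F') _ M1 ?_ hTA
        have he : fsize (ts ++ F') = fsize ts + fsize F' := fsize_append ts F'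
        simp only [fsize, tsize] at hN ⊢
        omega
      have hstep : FStep (LTree.node a ts :: F') (ts ++ F') := by
        have := FStep.delete ([] : List (LTree α)) F' ts a; simpa using this
      have hted : ted (LTree.node a ts :: F') (LTree.node b ss :: G') ≤
          ted (ts ++ F') (LTree.node b ss :: G') + 1 :=
        ted_le (FEdits.step hstep (edits_ted _ _))
      have hMle : M.length ≤ 2 * fsize ts + (pforest F').length := by
        have hl2 := length_le_of_lt_avoid
          (n := 2 * fsize ts + 2 + (pforest F').length)
          (x := 0) (y := 2 * fsize ts + 1) (nodup_fsts hm) (by omega) (by omega)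
          (by omega) (by
            intro z hz
            obtain ⟨p, hp, rfl⟩ := List.mem_map.mp hz
            exact ⟨hbF p hp, (huF p hp).1, (huF p hp).2⟩)
        simp only [List.length_map] at hl2
        omega
      have hMleG : M.length ≤ (pforest (LTree.node b ss :: G')).length :=
        matching_length_le_snd hm (fun p hp => (hb p hp).2)
      have hmis : M1.countP (fun p => decide ((pforest (ts ++ F')).getD p.1 d ≠
          (pforest (LTree.node b ss :: G')).getD p.2 d)) =
          M.countP (fun p => decide ((pforest (LTree.node a ts :: F')).getD p.1 d ≠
          (pforest (LTree.node b ss :: G')).getD p.2 d)) := by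
        rw [hM1def, List.countP_map]
        refine List.countP_congr (fun p hp => ?_)
        have hcp := hch p hp
        simp only [Function.comp_apply]
        rw [hcp]
      have hlenM1 : M1.length = M.length := by rw [hM1def]; simp
      simp only [alignCost] at hIH ⊢
      rw [hmis, hlenM1, hlenF1] at hIH
      rw [hlenF]
      omega
    · rcases Nat.eq_zero_or_pos ov with rfl | hovpos
      · -- CASE 2a : roots matched to each other : split
        have hcv : cv = 2 * fsize ss + 1 := by
          rcases npairs_cons.mp ⟨b0, hb0⟩ with htp | ⟨o', c', hG', ho', hc'⟩
          · rcases tpairs_node.mp htp with ⟨_, h⟩ | ⟨o', c', hss, ho', hc'⟩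
            · exact h
            · omega
          · rw [hpstrG] at ho'; omega
        subst hcv
        have hclass : ∀ p ∈ M, (p.1 = 0 ∧ p.2 = 0) ∨
            (p.1 = 2 * fsize ts + 1 ∧ p.2 = 2 * fsize ss + 1) ∨
            (0 < p.1 ∧ p.1 < 2 * fsize ts + 1 ∧ 0 < p.2 ∧ p.2 < 2 * fsize ss + 1) ∨
            (2 * fsize ts + 1 < p.1 ∧ 2 * fsize ss + 1 < p.2) := by
          intro p hp
          rcases pairwise_trichotomy hm p (0, 0) hp hoM with heq | h1 | h1
          · exact Or.inl ⟨by rw [heq], by rw [heq]⟩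
          · exact absurd h1.1 (by omega)
          · rcases pairwise_trichotomy hm p (2 * fsize ts + 1, 2 * fsize ss + 1) hp hcM with
              heq | h2 | h2
            · exact Or.inr (Or.inl ⟨by rw [heq], by rw [heq]⟩)
            · exact Or.inr (Or.inr (Or.inl ⟨h1.1, h2.1, h1.2, h2.2⟩))
            · exact Or.inr (Or.inr (Or.inr ⟨h2.1, h2.2⟩))
        set Min := (M.filter (fun p => decide (0 < p.1) && decide (p.1 < 2 * fsize ts + 1))).map
          (fun p => (p.1 - 1, p.2 - 1)) with hMindef
        set Mout := (M.filter (fun p => decide (2 * fsize ts + 1 < p.1))).map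
          (fun p => (p.1 - (2 * fsize ts + 2), p.2 - (2 * fsize ss + 2))) with hMoutdef
        have hMinmem : ∀ q ∈ Min, ∃ p, p ∈ M ∧
            (0 < p.1 ∧ p.1 < 2 * fsize ts + 1 ∧ 0 < p.2 ∧ p.2 < 2 * fsize ss + 1) ∧
            q = (p.1 - 1, p.2 - 1) := by
          intro q hq
          rw [hMindef] at hq
          obtain ⟨p, hpf, rfl⟩ := List.mem_map.mp hq
          have hpM := List.mem_of_mem_filter hpf
          have hcondp := List.of_mem_filter hpf
          simp only [Bool.and_eq_true, decide_eq_true_eq] at hcondp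
          have hin : 0 < p.1 ∧ p.1 < 2 * fsize ts + 1 ∧ 0 < p.2 ∧ p.2 < 2 * fsize ss + 1 := by
            rcases hclass p hpM with h | h | h | h <;> omega
          exact ⟨p, hpM, hin, rfl⟩
        have hMoutmem : ∀ q ∈ Mout, ∃ p, p ∈ M ∧
            (2 * fsize ts + 1 < p.1 ∧ 2 * fsize ss + 1 < p.2) ∧
            q = (p.1 - (2 * fsize ts + 2), p.2 - (2 * fsize ss + 2)) := by
          intro q hq
          rw [hMoutdef] at hq
          obtain ⟨p, hpf, rfl⟩ := List.mem_map.mp hq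
          have hpM := List.mem_of_mem_filter hpf
          have hcondp := List.of_mem_filter hpf
          simp only [decide_eq_true_eq] at hcondp
          have hout : 2 * fsize ts + 1 < p.1 ∧ 2 * fsize ss + 1 < p.2 := by
            rcases hclass p hpM with h | h | h | h <;> omega
          exact ⟨p, hpM, hout, rfl⟩
        have hbFp : ∀ p ∈ M, p.1 < 2 * fsize ts + 2 + (pforest F').length := by
          intro p hp; have := (hb p hp).1; rwa [hlenF] at this
        have hbGp : ∀ p ∈ M, p.2 < 2 * fsize ss + 2 + (pforest G').length := by
          intro p hp; have := (hb p hp).2; rwa [hlenG] at this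
        have hTAin : TreeAligned ts ss Min := by
          refine ⟨?_, ?_, ?_⟩
          · rw [isMatching_iff, hMindef, List.pairwise_map]
            refine (hm.filter _).imp_of_mem (fun {p q} hp hq hpq => ?_)
            have h1 := List.of_mem_filter hp
            have h2 := List.of_mem_filter hq
            simp only [Bool.and_eq_true, decide_eq_true_eq] at h1 h2
            have h3 : 0 < p.2 ∧ 0 < q.2 := by
              rcases hclass p (List.mem_of_mem_filter hp) with h | h | h | h <;>
                rcases hclass q (List.mem_of_mem_filter hq) with h' | h' | h' | h' <;> omega
            exact ⟨by omega, by omega⟩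
          · intro q hq
            obtain ⟨p, hpM, hin, rfl⟩ := hMinmem q hq
            rw [hLts, hLss]
            dsimp only
            omega
          · intro a1 o c ha1
            have hbnd := npairs_bounds ts ⟨a1, ha1⟩
            rw [hLts] at hbnd
            have hnpF : NPairs (LTree.node a ts :: F') (o + 1) (c + 1) :=
              npairs_cons.mpr (Or.inl (tpairs_node.mpr (Or.inr ⟨o, c, ⟨a1, ha1⟩, rfl, rfl⟩)))
            obtain ⟨a2, ha2⟩ := hnpF
            rcases hcond a2 (o + 1) (c + 1) ha2 with hl | ⟨b1, ov1, cv1, hb1, ho1, hc1⟩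
            · left
              intro q hq
              obtain ⟨p, hpM, hin, rfl⟩ := hMinmem q hq
              have h5 := (hl p hpM).1
              have h6 := (hl p hpM).2
              dsimp only
              constructor <;> omega
            · have hin1 : 0 < ov1 ∧ ov1 < 2 * fsize ss + 1 := by
                rcases hclass _ ho1 with h | h | h | h <;> dsimp only at h <;> omega
              have hin2 : 0 < cv1 ∧ cv1 < 2 * fsize ss + 1 := by
                rcases hclass _ hc1 with h | h | h | h <;> dsimp only at h <;> omega
              rcases npairs_cons.mp ⟨b1, hb1⟩ with htp | ⟨o', c', hG', ho', hc'⟩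
              · rcases tpairs_node.mp htp with ⟨h0, _⟩ | ⟨o', c', hss, ho', hc'⟩
                · omega
                · subst ho' hc'
                  obtain ⟨b2, hb2⟩ := hss
                  refine Or.inr ⟨b2, o', c', hb2, ?_, ?_⟩
                  · rw [hMindef]
                    refine List.mem_map.mpr ⟨(o + 1, o' + 1),
                      List.mem_filter.mpr ⟨ho1, by
                        simp only [Bool.and_eq_true, decide_eq_true_eq]; omega⟩, ?_⟩
                    simp
                  · rw [hMindef]
                    refine List.mem_map.mpr ⟨(c + 1, c' + 1),
                      List.mem_filter.mpr ⟨hc1, by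
                        simp only [Bool.and_eq_true, decide_eq_true_eq]; omega⟩, ?_⟩
                    simp
              · rw [hpstrG] at ho'
                omega
        have hTAout : TreeAligned F' G' Mout := by
          refine ⟨?_, ?_, ?_⟩
          · rw [isMatching_iff, hMoutdef, List.pairwise_map]
            refine (hm.filter _).imp_of_mem (fun {p q} hp hq hpq => ?_)
            have h1 := List.of_mem_filter hp
            have h2 := List.of_mem_filter hq
            simp only [decide_eq_true_eq] at h1 h2
            have h3 : 2 * fsize ss + 1 < p.2 ∧ 2 * fsize ss + 1 < q.2 := by
              rcases hclass p (List.mem_of_mem_filter hp) with h | h | h | h <;>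
                rcases hclass q (List.mem_of_mem_filter hq) with h' | h' | h' | h' <;> omega
            exact ⟨by omega, by omega⟩
          · intro q hq
            obtain ⟨p, hpM, hout, rfl⟩ := hMoutmem q hq
            have h1 := hbFp p hpM
            have h2 := hbGp p hpM
            dsimp only
            constructor <;> omega
          · intro a1 o c ha1
            have hbnd := npairs_bounds F' ⟨a1, ha1⟩
            have hnpF : NPairs (LTree.node a ts :: F')
                (o + (2 * fsize ts + 2)) (c + (2 * fsize ts + 2)) :=
              npairs_cons.mpr (Or.inr ⟨o, c, ⟨a1, ha1⟩, by rw [hpstrF], by rw [hpstrF]⟩)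
            obtain ⟨a2, ha2⟩ := hnpF
            rcases hcond a2 _ _ ha2 with hl | ⟨b1, ov1, cv1, hb1, ho1, hc1⟩
            · left
              intro q hq
              obtain ⟨p, hpM, hout, rfl⟩ := hMoutmem q hq
              have h5 := (hl p hpM).1
              have h6 := (hl p hpM).2
              dsimp only
              constructor <;> omega
            · have hout1 : 2 * fsize ss + 1 < ov1 := by
                rcases hclass _ ho1 with h | h | h | h <;> dsimp only at h <;> omega
              have hout2 : 2 * fsize ss + 1 < cv1 := by
                rcases hclass _ hc1 with h | h | h | h <;> dsimp only at h <;> omega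
              rcases npairs_cons.mp ⟨b1, hb1⟩ with htp | ⟨o', c', hG', ho', hc'⟩
              · rcases tpairs_node.mp htp with ⟨h0, _⟩ | ⟨o', c', hss, ho', hc'⟩
                · omega
                · have hbnd' := npairs_bounds ss hss
                  rw [hLss] at hbnd'
                  omega
              · rw [hpstrG] at ho' hc'
                subst ho' hc'
                obtain ⟨b2, hb2⟩ := hG'
                refine Or.inr ⟨b2, o', c', hb2, ?_, ?_⟩
                · rw [hMoutdef]
                  refine List.mem_map.mpr ⟨(o + (2 * fsize ts + 2), o' + (2 * fsize ss + 2)),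
                    List.mem_filter.mpr ⟨ho1, by
                      simp only [decide_eq_true_eq]; omega⟩, ?_⟩
                  simp only [Prod.mk.injEq]
                  constructor <;> omega
                · rw [hMoutdef]
                  refine List.mem_map.mpr ⟨(c + (2 * fsize ts + 2), c' + (2 * fsize ss + 2)),
                    List.mem_filter.mpr ⟨hc1, by
                      simp only [decide_eq_true_eq]; omega⟩, ?_⟩
                  simp only [Prod.mk.injEq]
                  constructor <;> omega
        have hIHin : 2 * ted ts ss ≤ alignCost (pforest ts) (pforest ss) d Min := by
          refine ih ts ss Min ?_ hTAin
          simp only [fsize, tsize] at hN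
          omega
        have hIHout : 2 * ted F' G' ≤ alignCost (pforest F') (pforest G') d Mout := by
          refine ih F' G' Mout ?_ hTAout
          simp only [fsize, tsize] at hN
          omega
        -- lengths of the pieces
        obtain ⟨hAin1, hAin2, _⟩ := hTAin
        obtain ⟨hAout1, hAout2, _⟩ := hTAout
        have hMinle1 : Min.length ≤ (pforest ts).length :=
          matching_length_le_fst (isMatching_iff.mp hAin1) (fun p hp => (hAin2 p hp).1)
        have hMinle2 : Min.length ≤ (pforest ss).length :=
          matching_length_le_snd (isMatching_iff.mp hAin1) (fun p hp => (hAin2 p hp).2)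
        have hMoutle1 : Mout.length ≤ (pforest F').length :=
          matching_length_le_fst (isMatching_iff.mp hAout1) (fun p hp => (hAout2 p hp).1)
        have hMoutle2 : Mout.length ≤ (pforest G').length :=
          matching_length_le_snd (isMatching_iff.mp hAout1) (fun p hp => (hAout2 p hp).2)
        -- counting
        have hexact : ∀ x ∈ M, (decide (x.1 = 0)).toNat +
            ((decide (0 < x.1) && decide (x.1 < 2 * fsize ts + 1))).toNat +
            (decide (x.1 = 2 * fsize ts + 1)).toNat +
            (decide (2 * fsize ts + 1 < x.1)).toNat = 1 :=
          fun x _ => exactly_one_fst (2 * fsize ts + 1) (by omega) x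
        have hsplitlen := length_countP4 (fun x => decide (x.1 = 0))
          (fun x => decide (0 < x.1) && decide (x.1 < 2 * fsize ts + 1))
          (fun x => decide (x.1 = 2 * fsize ts + 1))
          (fun x => decide (2 * fsize ts + 1 < x.1)) M hexact
        beta_reduce at hsplitlen
        have hlenMin : Min.length =
            M.countP (fun x => decide (0 < x.1) && decide (x.1 < 2 * fsize ts + 1)) := by
          rw [hMindef, List.length_map, ← List.countP_eq_length_filter]
        have hlenMout : Mout.length =
            M.countP (fun x => decide (2 * fsize ts + 1 < x.1)) := by
          rw [hMoutdef, List.length_map, ← List.countP_eq_length_filter]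
        have hcount0 : M.countP (fun x => decide (x.1 = 0)) = 1 := by
          have hle := countP_fst_eq_le_one hm 0
          have hpos : 0 < M.countP (fun x => decide (x.1 = 0)) :=
            List.countP_pos_iff.mpr ⟨(0, 0), hoM, by simp⟩
          omega
        have hcountct : M.countP (fun x => decide (x.1 = 2 * fsize ts + 1)) = 1 := by
          have hle := countP_fst_eq_le_one hm (2 * fsize ts + 1)
          have hpos : 0 < M.countP (fun x => decide (x.1 = 2 * fsize ts + 1)) :=
            List.countP_pos_iff.mpr ⟨(2 * fsize ts + 1, 2 * fsize ss + 1), hcM, by simp⟩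
          omega
        -- mismatch split
        have hsplitmis := countP_split4
          (fun x => decide ((pforest (LTree.node a ts :: F')).getD x.1 d ≠
            (pforest (LTree.node b ss :: G')).getD x.2 d))
          (fun x => decide (x.1 = 0))
          (fun x => decide (0 < x.1) && decide (x.1 < 2 * fsize ts + 1))
          (fun x => decide (x.1 = 2 * fsize ts + 1))
          (fun x => decide (2 * fsize ts + 1 < x.1)) M hexact
        beta_reduce at hsplitmis
        have hmisin : Min.countP (fun p => decide ((pforest ts).getD p.1 d ≠
            (pforest ss).getD p.2 d)) =
            M.countP (fun x => (decide (0 < x.1) && decide (x.1 < 2 * fsize ts + 1)) &&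
              decide ((pforest (LTree.node a ts :: F')).getD x.1 d ≠
                (pforest (LTree.node b ss :: G')).getD x.2 d)) := by
          rw [hMindef, List.countP_map, List.countP_filter]
          refine List.countP_congr (fun p hp => ?_)
          simp only [Function.comp_apply, Bool.and_eq_true, decide_eq_true_eq]
          by_cases hcp : 0 < p.1 ∧ p.1 < 2 * fsize ts + 1
          · have hin : 0 < p.1 ∧ p.1 < 2 * fsize ts + 1 ∧ 0 < p.2 ∧ p.2 < 2 * fsize ss + 1 := by
              rcases hclass p hp with h | h | h | h <;> omega
            have hch1 : (pforest ts).getD (p.1 - 1) d =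
                (pforest (LTree.node a ts :: F')).getD p.1 d :=
              (char_inner d a ts F' hin.1 hin.2.1).symm
            have hch2 : (pforest ss).getD (p.2 - 1) d =
                (pforest (LTree.node b ss :: G')).getD p.2 d :=
              (char_inner d b ss G' hin.2.2.1 hin.2.2.2).symm
            rw [hch1, hch2]
            exact ⟨fun h => ⟨h.2, h.1⟩, fun h => ⟨h.2, h.1⟩⟩
          · exact ⟨fun h => absurd h.2 hcp, fun h => absurd h.1 hcp⟩
        have hmisout : Mout.countP (fun p => decide ((pforest F').getD p.1 d ≠
            (pforest G').getD p.2 d)) =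
            M.countP (fun x => decide (2 * fsize ts + 1 < x.1) &&
              decide ((pforest (LTree.node a ts :: F')).getD x.1 d ≠
                (pforest (LTree.node b ss :: G')).getD x.2 d)) := by
          rw [hMoutdef, List.countP_map, List.countP_filter]
          refine List.countP_congr (fun p hp => ?_)
          simp only [Function.comp_apply, Bool.and_eq_true, decide_eq_true_eq]
          by_cases hcp : 2 * fsize ts + 1 < p.1
          · have hout : 2 * fsize ts + 1 < p.1 ∧ 2 * fsize ss + 1 < p.2 := by
              rcases hclass p hp with h | h | h | h <;> omega
            have hch1 : (pforest F').getD (p.1 - (2 * fsize ts + 2)) d =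
                (pforest (LTree.node a ts :: F')).getD p.1 d :=
              (char_outer d a ts F' hout.1).symm
            have hch2 : (pforest G').getD (p.2 - (2 * fsize ss + 2)) d =
                (pforest (LTree.node b ss :: G')).getD p.2 d :=
              (char_outer d b ss G' hout.2).symm
            rw [hch1, hch2]
            exact ⟨fun h => ⟨h.2, h.1⟩, fun h => ⟨h.2, h.1⟩⟩
          · exact ⟨fun h => absurd h.2 hcp, fun h => absurd h.1 hcp⟩
        simp only [alignCost] at hIHin hIHout ⊢
        rw [hmisin] at hIHin
        rw [hmisout] at hIHout
        rw [hLts] at hMinle1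
        rw [hLss] at hMinle2
        rw [hLts, hLss] at hIHin
        rw [hlenF, hlenG]
        by_cases hab : a = b
        · subst hab
          have hed : FEdits (ted ts ss + ted F' G')
              (LTree.node a ts :: F') (LTree.node a ss :: G') :=
            fedits_trans (fedits_congr_head F' a (edits_ted ts ss))
              (fedits_cons _ (edits_ted F' G'))
          have hted := ted_le hed
          omega
        · have hstepr : FStep (LTree.node a ss :: G') (LTree.node b ss :: G') := by
            have := FStep.relabel ([] : List (LTree α)) G' ss a b; simpa using this
          have hed : FEdits (ted ts ss + ted F' G' + 1)
              (LTree.node a ts :: F') (LTree.node b ss :: G') :=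
            fedits_snoc (fedits_trans (fedits_congr_head F' a (edits_ted ts ss))
              (fedits_cons _ (edits_ted F' G'))) hstepr
          have hted := ted_le hed
          have hmz : 1 ≤ M.countP (fun x => decide (x.1 = 0) &&
              decide ((pforest (LTree.node a ts :: F')).getD x.1 d ≠
                (pforest (LTree.node b ss :: G')).getD x.2 d)) := by
            refine List.countP_pos_iff.mpr ⟨(0, 0), hoM, ?_⟩
            simp only [Bool.and_eq_true, decide_eq_true_eq]
            refine ⟨trivial, ?_⟩
            rw [char_root_open, char_root_open]
            simp [hab]
          have hmct : 1 ≤ M.countP (fun x => decide (x.1 = 2 * fsize ts + 1) &&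
              decide ((pforest (LTree.node a ts :: F')).getD x.1 d ≠
                (pforest (LTree.node b ss :: G')).getD x.2 d)) := by
            refine List.countP_pos_iff.mpr ⟨(2 * fsize ts + 1, 2 * fsize ss + 1), hcM, ?_⟩
            simp only [Bool.and_eq_true, decide_eq_true_eq]
            refine ⟨trivial, ?_⟩
            rw [char_root_close, char_root_close]
            simp [hab]
          omega
      · -- CASE 2b : root of G untouched : insert it
        have huG0 : ∀ p ∈ M, p.2 ≠ 0 := by
          intro p hp
          rcases pairwise_trichotomy hm p (0, ov) hp hoM with heq | h' | h'
          · rw [heq]; omega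
          · exact absurd h'.1 (by omega)
          · omega
        have huGcs : ∀ p ∈ M, p.2 ≠ 2 * fsize ss + 1 := by
          intro p hp heq
          have hpi := (hb p hp).1
          obtain ⟨o, c, hnp, hor⟩ := npairs_complete _ p.1 hpi
          obtain ⟨a2, ha2⟩ := hnp
          rcases hcond a2 o c ha2 with hl | ⟨b1, ov1, cv1, hb1, ho1, hc1⟩
          · rcases hor with h | h
            · exact (hl p hp).1 h
            · exact (hl p hp).2 h
          · rcases hor with h | h
            · have hpe : p = (o, ov1) := mem_fst_inj hm hp ho1 (by omega)
              have hov1 : ov1 = 2 * fsize ss + 1 := by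
                rw [hpe] at heq; simpa using heq
              rcases npairs_cons.mp ⟨b1, hb1⟩ with htp | ⟨o', c', hG', ho', hc'⟩
              · rcases tpairs_node.mp htp with ⟨h0, _⟩ | ⟨o', c', hss, ho', hc'⟩
                · omega
                · have hbnd := npairs_bounds ss hss
                  rw [hLss] at hbnd
                  omega
              · rw [hpstrG] at ho'
                omega
            · have hpe : p = (c, cv1) := mem_fst_inj hm hp hc1 (by omega)
              have hcv1 : cv1 = 2 * fsize ss + 1 := by
                rw [hpe] at heq; simpa using heq
              rcases npairs_cons.mp ⟨b1, hb1⟩ with htp | ⟨o', c', hG', ho', hc'⟩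
              · rcases tpairs_node.mp htp with ⟨ho0, hc0⟩ | ⟨o', c', hss, ho', hc'⟩
                · subst ho0
                  exact huG0 _ ho1 rfl
                · have hbnd := npairs_bounds ss hss
                  rw [hLss] at hbnd
                  omega
              · rw [hpstrG] at hc'
                omega
        set M2 := M.map (fun p =>
          (p.1, if p.2 < 2 * fsize ss + 1 then p.2 - 1 else p.2 - 2)) with hM2def
        have hbG : ∀ p ∈ M, p.2 < 2 * fsize ss + 2 + (pforest G').length := by
          intro p hp; have := (hb p hp).2; rwa [hlenG] at this
        have hsG1 : pforest (ss ++ G') = pforest ss ++ pforest G' := pforest_append ss G'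
        have hlenG1 : (pforest (ss ++ G')).length = 2 * fsize ss + (pforest G').length := by
          rw [hsG1]; simp [hLss]
        have hch : ∀ p ∈ M, (pforest (ss ++ G')).getD
            (if p.2 < 2 * fsize ss + 1 then p.2 - 1 else p.2 - 2) d =
            (pforest (LTree.node b ss :: G')).getD p.2 d := by
          intro p hp
          have h1 := huG0 p hp
          have h1' := huGcs p hp
          have h2 := hbG p hp
          split_ifs with hlt
          · rw [char_inner d b ss G' (by omega) (by omega), hsG1,
              getD_app_l _ _ _ (by omega)]
          · rw [char_outer d b ss G' (by omega), hsG1,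
              getD_app_r' _ _ _ (by omega)]
            congr 1
            omega
        have hTA : TreeAligned (LTree.node a ts :: F') (ss ++ G') M2 := by
          refine ⟨?_, ?_, ?_⟩
          · rw [isMatching_iff, hM2def, List.pairwise_map]
            refine hm.imp_of_mem (fun {p q} hp hq hpq => ?_)
            have h1 := huG0 p hp; have h2 := huG0 q hq
            have h1' := huGcs p hp; have h2' := huGcs q hq
            have h3 := hbG p hp; have h4 := hbG q hq
            refine ⟨hpq.1, ?_⟩
            dsimp only
            split_ifs <;> omega
          · intro q hq
            rw [hM2def] at hq
            obtain ⟨p, hp, rfl⟩ := List.mem_map.mp hq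
            have h1 := huG0 p hp; have h1' := huGcs p hp; have h2 := hbG p hp
            have h3 := (hb p hp).1
            rw [hlenG1]
            dsimp only
            constructor
            · exact h3
            · split_ifs <;> omega
          · intro a1 o c ha1
            rcases hcond a1 o c ha1 with hl | ⟨b1, ov1, cv1, hb1, ho1, hc1⟩
            · left
              intro q hq
              rw [hM2def] at hq
              obtain ⟨p, hp, rfl⟩ := List.mem_map.mp hq
              exact hl p hp
            · have hov10 := huG0 _ ho1
              have hov1cs := huGcs _ ho1
              have hcv10 := huG0 _ hc1
              have hcv1cs := huGcs _ hc1
              rcases npairs_cons.mp ⟨b1, hb1⟩ with htp | ⟨o', c', hG', ho', hc'⟩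
              · rcases tpairs_node.mp htp with ⟨h0, _⟩ | ⟨o', c', hss, ho', hc'⟩
                · exact absurd h0 (by simpa using hov10)
                · subst ho' hc'
                  have hbnd := npairs_bounds ss hss
                  rw [hLss] at hbnd
                  obtain ⟨b2, hb2⟩ : NPairs (ss ++ G') o' c' :=
                    npairs_append.mpr (Or.inl hss)
                  refine Or.inr ⟨b2, o', c', hb2, ?_, ?_⟩
                  · rw [hM2def]
                    refine List.mem_map.mpr ⟨(o, o' + 1), ho1, ?_⟩
                    dsimp only
                    rw [if_pos (by omega)]
                    simp
                  · rw [hM2def]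
                    refine List.mem_map.mpr ⟨(c, c' + 1), hc1, ?_⟩
                    dsimp only
                    rw [if_pos (by omega)]
                    simp
              · subst ho' hc'
                rw [hpstrG] at *
                have hbnd := npairs_bounds G' hG'
                obtain ⟨b2, hb2⟩ : NPairs (ss ++ G')
                    (o' + (pforest ss).length) (c' + (pforest ss).length) :=
                  npairs_append.mpr (Or.inr ⟨o', c', hG', rfl, rfl⟩)
                refine Or.inr ⟨b2, _, _, hb2, ?_, ?_⟩
                · rw [hM2def]
                  refine List.mem_map.mpr ⟨(o, o' + (2 * fsize ss + 2)), ho1, ?_⟩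
                  dsimp only
                  rw [if_neg (by omega)]
                  simp only [Prod.mk.injEq]
                  exact ⟨trivial, by omega⟩
                · rw [hM2def]
                  refine List.mem_map.mpr ⟨(c, c' + (2 * fsize ss + 2)), hc1, ?_⟩
                  dsimp only
                  rw [if_neg (by omega)]
                  simp only [Prod.mk.injEq]
                  exact ⟨trivial, by omega⟩
        have hIH : 2 * ted (LTree.node a ts :: F') (ss ++ G') ≤
            alignCost (pforest (LTree.node a ts :: F')) (pforest (ss ++ G')) d M2 := by
          refine ih _ (ss ++ G') M2 ?_ hTA
          have he : fsize (ss ++ G') = fsize ss + fsize G' := fsize_append ss G'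
          simp only [fsize, tsize] at hN ⊢
          omega
        have hstep : FStep (ss ++ G') (LTree.node b ss :: G') := by
          have := FStep.insert ([] : List (LTree α)) ss G' b; simpa using this
        have hted : ted (LTree.node a ts :: F') (LTree.node b ss :: G') ≤
            ted (LTree.node a ts :: F') (ss ++ G') + 1 :=
          ted_le (fedits_snoc (edits_ted _ _) hstep)
        have hMle : M.length ≤ 2 * fsize ss + (pforest G').length := by
          have hl2 := length_le_of_lt_avoid
            (n := 2 * fsize ss + 2 + (pforest G').length)
            (x := 0) (y := 2 * fsize ss + 1) (nodup_snds hm) (by omega) (by omega)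
            (by omega) (by
              intro z hz
              obtain ⟨p, hp, rfl⟩ := List.mem_map.mp hz
              exact ⟨hbG p hp, huG0 p hp, huGcs p hp⟩)
          simp only [List.length_map] at hl2
          omega
        have hMleF : M.length ≤ (pforest (LTree.node a ts :: F')).length :=
          matching_length_le_fst hm (fun p hp => (hb p hp).1)
        have hmis : M2.countP (fun p => decide ((pforest (LTree.node a ts :: F')).getD p.1 d ≠
            (pforest (ss ++ G')).getD p.2 d)) =
            M.countP (fun p => decide ((pforest (LTree.node a ts :: F')).getD p.1 d ≠
            (pforest (LTree.node b ss :: G')).getD p.2 d)) := by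
          rw [hM2def, List.countP_map]
          refine List.countP_congr (fun p hp => ?_)
          have hcp := hch p hp
          simp only [Function.comp_apply]
          rw [hcp]
        have hlenM2 : M2.length = M.length := by rw [hM2def]; simp
        simp only [alignCost] at hIH ⊢
        rw [hmis, hlenM2, hlenG1] at hIH
        rw [hlenG]
        omega
end TedAux
/-- `2·ted(F,G)` equals the minimum cost of a tree alignment of `str(F)` and
`str(G)`. -/
theorem stmt10 {α : Type} [DecidableEq α] (d : Bool × α) (F G : List (LTree α)) :
    2 * ted F G =
      sInf {c | ∃ M, TreeAligned F G M ∧ c = alignCost (pforest F) (pforest G) d M} := by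
  have hempty : TreeAligned F G [] := by
    refine ⟨List.isChain_nil, ?_, ?_⟩
    · intro p hp; exact absurd hp (List.not_mem_nil (a := p))
    · intro a ou cu _
      exact Or.inl (fun q hq => absurd hq (List.not_mem_nil (a := q)))
  have hne : {c | ∃ M, TreeAligned F G M ∧
      c = alignCost (pforest F) (pforest G) d M}.Nonempty :=
    ⟨alignCost (pforest F) (pforest G) d [], [], hempty, rfl⟩
  apply le_antisymm
  · obtain ⟨M0, hTA0, heq⟩ := Nat.sInf_mem hne
    calc 2 * ted F G ≤ alignCost (pforest F) (pforest G) d M0 :=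
          TedAux.two_ted_le_aligned d (fsize F + fsize G) F G M0 le_rfl hTA0
      _ = _ := heq.symm
  · obtain ⟨M, hTA, hcost⟩ := TedAux.aligned_of_edits d (TedAux.edits_ted F G)
    have hmem : alignCost (pforest F) (pforest G) d M ∈
        {c | ∃ M, TreeAligned F G M ∧ c = alignCost (pforest F) (pforest G) d M} :=
      ⟨M, hTA, rfl⟩
    exact le_trans (Nat.sInf_le hmem) hcost
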